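/- arXiv:2101.09043 — 10 statements merged into one kernel-verified Lean document; each statement's English description precedes it below -/
import Mathlib

section
/- The matrix D is symmetric positive definite. -/
/-- The 1D finite-difference discretization matrix D of the
Gross–Pitaevskii operator is symmetric positive definite. -/
theorem stmt_0 (n : ℕ) (hn : 1 ≤ n) (h : ℝ) (hh : 0 < h)
    (v : Fin n → ℝ) (hv : ∀ i, 0 ≤ v i)
    (D : Matrix (Fin n) (Fin n) ℝ)
    (hDdiag : ∀ i : Fin n, D i i = 1 / h ^ 2 + v i)
    (hDoff : ∀ i j : Fin n, |(i : ℤ) - (j : ℤ)| = 1 → D i j = -(1 / (2 * h ^ 2)))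
    (hDzero : ∀ i j : Fin n, 2 ≤ |(i : ℤ) - (j : ℤ)| → D i j = 0) :
    D.IsSymm ∧ D.PosDef := by
  have hh2 : (0:ℝ) < h ^ 2 := by positivity
  -- symmetry
  have hsym : ∀ i j : Fin n, D j i = D i j := by
    intro i j
    by_cases h1 : (i : ℤ) = (j : ℤ)
    · have : i = j := Fin.ext (by exact_mod_cast h1)
      rw [this]
    · by_cases h2 : |(i : ℤ) - (j : ℤ)| = 1
      · rw [hDoff i j h2, hDoff j i (by rw [abs_sub_comm]; exact h2)]
      · have h3 : 2 ≤ |(i : ℤ) - (j : ℤ)| := by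
          rcases abs_cases ((i : ℤ) - (j : ℤ)) with ⟨hd, hd2⟩ | ⟨hd, hd2⟩ <;>
            rw [hd] at h2 ⊢ <;> omega
        rw [hDzero i j h3, hDzero j i (by rw [abs_sub_comm]; exact h3)]
  have hIsSymm : D.IsSymm := by
    ext i j
    simp only [Matrix.transpose_apply]
    exact hsym i j
  refine ⟨hIsSymm, ?_⟩
  have hherm : D.IsHermitian := by
    ext i j
    simp only [Matrix.conjTranspose_apply, star_trivial]
    exact hsym i j
  set c : ℝ := 1 / (2 * h ^ 2) with hc
  have hcpos : 0 < c := by positivity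
  -- the incidence matrix
  set B : Matrix (Fin (n + 1)) (Fin n) ℝ :=
    fun k j => if (k : ℕ) = (j : ℕ) then 1 else if (k : ℕ) = (j : ℕ) + 1 then -1 else 0 with hB
  -- entrywise decomposition D = c • (Bᵀ * B) + diagonal v
  have hBB : ∀ i j : Fin n, (B.transpose * B) i j =
      B ⟨i.1, by omega⟩ j - B ⟨i.1 + 1, by omega⟩ j := by
    intro i j
    have key : ∀ k : Fin (n + 1), B k i * B k j =
        (if k = (⟨i.1, by omega⟩ : Fin (n + 1)) then B k j else 0) +
        (if k = (⟨i.1 + 1, by omega⟩ : Fin (n + 1)) then -B k j else 0) := by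
      intro k
      simp only [hB, Fin.ext_iff]
      split_ifs <;> first | (exfalso; first | omega | assumption) | ring
    rw [Matrix.mul_apply]
    simp only [Matrix.transpose_apply]
    rw [Finset.sum_congr rfl fun k _ => key k, Finset.sum_add_distrib,
      Finset.sum_ite_eq' Finset.univ, Finset.sum_ite_eq' Finset.univ]
    simp [sub_eq_add_neg]
  have hD : D = c • (B.transpose * B) + Matrix.diagonal v := by
    ext i j
    rw [Matrix.add_apply, Matrix.smul_apply, hBB i j, Matrix.diagonal_apply, smul_eq_mul]
    by_cases h1 : (i : ℤ) = (j : ℤ)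
    · have hij : i = j := Fin.ext (by exact_mod_cast h1)
      subst hij
      rw [hDdiag i, if_pos rfl]
      simp only [hB, Fin.ext_iff]
      split_ifs <;> first | (exfalso; first | omega | assumption) | (rw [hc]; field_simp; ring)
    · have hij : i ≠ j := fun hcon => h1 (by rw [hcon])
      rw [if_neg hij]
      by_cases h2 : |(i : ℤ) - (j : ℤ)| = 1
      · rw [hDoff i j h2]
        have h2' : (i:ℕ) + 1 = (j:ℕ) ∨ (i:ℕ) = (j:ℕ) + 1 := by
          rcases abs_cases ((i : ℤ) - (j : ℤ)) with ⟨hd, hd2⟩ | ⟨hd, hd2⟩ <;>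
            rw [hd] at h2 <;> omega
        simp only [hB, Fin.ext_iff]
        rcases h2' with h2' | h2' <;>
          · split_ifs <;> first | (exfalso; first | omega | assumption) | (rw [hc]; ring)
      · have h3 : 2 ≤ |(i : ℤ) - (j : ℤ)| := by
          rcases abs_cases ((i : ℤ) - (j : ℤ)) with ⟨hd, hd2⟩ | ⟨hd, hd2⟩ <;>
            rw [hd] at h2 ⊢ <;> omega
        have h3' : (i:ℕ) + 2 ≤ (j:ℕ) ∨ (j:ℕ) + 2 ≤ (i:ℕ) := by
          rcases abs_cases ((i : ℤ) - (j : ℤ)) with ⟨hd, hd2⟩ | ⟨hd, hd2⟩ <;>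
            rw [hd] at h3 <;> omega
        rw [hDzero i j h3]
        simp only [hB, Fin.ext_iff]
        split_ifs <;> first | (exfalso; first | omega | assumption) | ring
  -- kernel of B is trivial
  have hker : ∀ x : Fin n → ℝ, B.mulVec x = 0 → x = 0 := by
    intro x hx
    have key : ∀ m : ℕ, ∀ hm : m < n, x ⟨m, hm⟩ = 0 := by
      intro m
      induction m with
      | zero =>
        intro hm
        have h0 := congrFun hx ⟨0, by omega⟩
        rw [Matrix.mulVec, dotProduct] at h0
        have key0 : ∀ j : Fin n, B ⟨0, by omega⟩ j * x j =
            if j = (⟨0, hm⟩ : Fin n) then x j else 0 := by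
          intro j
          simp only [hB, Fin.ext_iff]
          split_ifs <;> first | (exfalso; first | omega | assumption) | ring
        rw [Finset.sum_congr rfl fun j _ => key0 j, Finset.sum_ite_eq' Finset.univ] at h0
        simpa using h0
      | succ m ih =>
        intro hm
        have hmn : m < n := by omega
        have h0 := congrFun hx ⟨m + 1, by omega⟩
        rw [Matrix.mulVec, dotProduct] at h0
        have key0 : ∀ j : Fin n, B ⟨m + 1, by omega⟩ j * x j =
            (if j = (⟨m + 1, hm⟩ : Fin n) then x j else 0) +
            (if j = (⟨m, hmn⟩ : Fin n) then -x j else 0) := by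
          intro j
          simp only [hB, Fin.ext_iff]
          split_ifs <;> first | (exfalso; first | omega | assumption) | ring
        rw [Finset.sum_congr rfl fun j _ => key0 j, Finset.sum_add_distrib,
          Finset.sum_ite_eq' Finset.univ, Finset.sum_ite_eq' Finset.univ] at h0
        simp only [Finset.mem_univ, if_true, Pi.zero_apply] at h0
        have hxm : x ⟨m, hmn⟩ = 0 := ih hmn
        rw [hxm] at h0
        linarith
    funext i
    have := key i.1 i.2
    simpa using this
  refine Matrix.posDef_iff_dotProduct_mulVec.mpr ⟨hherm, ?_⟩
  intro x hx
  have hform : dotProduct (star x) (D.mulVec x) =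
      c * dotProduct (B.mulVec x) (B.mulVec x) +
      dotProduct x ((Matrix.diagonal v).mulVec x) := by
    rw [hD, Matrix.add_mulVec, dotProduct_add, star_trivial,
      Matrix.smul_mulVec, dotProduct_smul, smul_eq_mul,
      ← Matrix.mulVec_mulVec, Matrix.dotProduct_mulVec x B.transpose,
      Matrix.vecMul_transpose]
  rw [hform]
  have hdiag : 0 ≤ dotProduct x ((Matrix.diagonal v).mulVec x) := by
    rw [dotProduct]
    refine Finset.sum_nonneg fun i _ => ?_
    rw [Matrix.mulVec_diagonal]
    have := mul_nonneg (hv i) (mul_self_nonneg (x i))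
    nlinarith
  have hBx : B.mulVec x ≠ 0 := fun hcon => hx (hker x hcon)
  have hpos : 0 < dotProduct (B.mulVec x) (B.mulVec x) := by
    rw [dotProduct]
    obtain ⟨k, hk⟩ := Function.ne_iff.mp hBx
    refine Finset.sum_pos' (fun i _ => mul_self_nonneg _) ⟨k, Finset.mem_univ k, ?_⟩
    exact mul_self_pos.mpr (by simpa using hk)
  have := mul_pos hcpos hpos
  linarith
end

section
/- The matrix D is symmetric positive definite. -/
open Matrix Finset

namespace GPaux


noncomputable def Tmat (m : ℕ) : Matrix (Fin m) (Fin m) ℝ :=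
  fun i k => if i = k then 2 else if |(i : ℤ) - (k : ℤ)| = 1 then -1 else 0

noncomputable def Bmat (m : ℕ) : Matrix (Fin (m+1)) (Fin m) ℝ :=
  fun l i => (if (l : ℕ) = (i : ℕ) then 1 else 0) - (if (l : ℕ) = (i : ℕ) + 1 then 1 else 0)

lemma key (m a b : ℕ) (ha : a ≤ m) :
    ∑ l : Fin (m+1), (if (l : ℕ) = a then (1:ℝ) else 0) * (if (l : ℕ) = b then 1 else 0)
      = if a = b then 1 else 0 := by
  rw [Finset.sum_eq_single (⟨a, by omega⟩ : Fin (m+1))]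
  · simp
  · intro l _ hl
    have : (l : ℕ) ≠ a := fun h => hl (Fin.ext h)
    simp [this]
  · simp

lemma Tmat_eq (m : ℕ) : Tmat m = (Bmat m)ᴴ * Bmat m := by
  ext i k
  simp only [Matrix.mul_apply, Matrix.conjTranspose_apply, star_trivial, Bmat]
  have expand : ∀ l : Fin (m+1),
      ((if (l : ℕ) = (i : ℕ) then (1:ℝ) else 0) - (if (l : ℕ) = (i : ℕ) + 1 then 1 else 0)) *
      ((if (l : ℕ) = (k : ℕ) then (1:ℝ) else 0) - (if (l : ℕ) = (k : ℕ) + 1 then 1 else 0))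
      = (if (l : ℕ) = (i : ℕ) then (1:ℝ) else 0) * (if (l : ℕ) = (k : ℕ) then 1 else 0)
        - (if (l : ℕ) = (i : ℕ) then (1:ℝ) else 0) * (if (l : ℕ) = (k : ℕ) + 1 then 1 else 0)
        - (if (l : ℕ) = (i : ℕ) + 1 then (1:ℝ) else 0) * (if (l : ℕ) = (k : ℕ) then 1 else 0)
        + (if (l : ℕ) = (i : ℕ) + 1 then (1:ℝ) else 0) * (if (l : ℕ) = (k : ℕ) + 1 then 1 else 0) := by
    intro l; ring
  rw [Finset.sum_congr rfl (fun l _ => expand l), Finset.sum_add_distrib,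
    Finset.sum_sub_distrib, Finset.sum_sub_distrib,
    key m _ _ (by omega), key m _ _ (by omega), key m _ _ (by omega), key m _ _ (by omega)]
  rcases eq_or_ne i k with h | h
  · subst h
    norm_num [Tmat]
  · have hik : (i : ℕ) ≠ (k : ℕ) := fun hh => h (Fin.ext hh)
    rcases eq_or_ne (|(i : ℤ) - (k : ℤ)|) 1 with h1 | h1
    · have : (i : ℕ) = (k : ℕ) + 1 ∨ (k : ℕ) = (i : ℕ) + 1 := by
        rcases abs_eq (by norm_num : (0:ℤ) ≤ 1) |>.1 h1 with h2 | h2 <;> [left; right] <;> omega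
      rcases this with h2 | h2
      · have h3 : (i : ℕ) + 1 ≠ (k : ℕ) := by omega
        have h4 : (k : ℕ) + 1 + 1 ≠ (k : ℕ) := by omega
        simp [Tmat, h, h1, hik, h2, h3, h4]
      · have h3 : (i : ℕ) ≠ (k : ℕ) + 1 := by omega
        have h4 : (i : ℕ) ≠ (i : ℕ) + 1 + 1 := by omega
        simp [Tmat, h, h1, hik, h2.symm, h3, h4]
    · have h2 : (i : ℕ) ≠ (k : ℕ) + 1 := by
        intro hh; apply h1; have : (i:ℤ) = (k:ℤ) + 1 := by exact_mod_cast hh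
        rw [this]; simp
      have h3 : (i : ℕ) + 1 ≠ (k : ℕ) := by
        intro hh; apply h1
        have hik2 : (i:ℤ) + 1 = (k:ℤ) := by exact_mod_cast hh
        rw [show (i:ℤ) - (k:ℤ) = -1 by omega]; norm_num
      simp [Tmat, h, h1, hik, h2, h3]

lemma Bmat_inj {m : ℕ} {x : Fin m → ℝ} (h : Bmat m *ᵥ x = 0) : x = 0 := by
  have row : ∀ l : Fin (m+1),
      (∑ i : Fin m, (if (l : ℕ) = (i : ℕ) then (1:ℝ) else 0) * x i)
      - (∑ i : Fin m, (if (l : ℕ) = (i : ℕ) + 1 then (1:ℝ) else 0) * x i) = 0 := by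
    intro l
    have := congrFun h l
    simp only [Matrix.mulVec, dotProduct, Bmat, Pi.zero_apply] at this
    rw [← Finset.sum_sub_distrib]
    have e : (∑ i : Fin m, ((if (l : ℕ) = (i : ℕ) then (1:ℝ) else 0) * x i
          - (if (l : ℕ) = (i : ℕ) + 1 then (1:ℝ) else 0) * x i))
        = ∑ i : Fin m, ((if (l : ℕ) = (i : ℕ) then (1:ℝ) else 0)
            - if (l : ℕ) = (i : ℕ) + 1 then 1 else 0) * x i :=
      Finset.sum_congr rfl fun i _ => by ring
    rw [e]
    exact this
  have sum1 : ∀ a : ℕ, (ha : a < m) →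
      (∑ i : Fin m, (if a = (i : ℕ) then (1:ℝ) else 0) * x i) = x ⟨a, ha⟩ := by
    intro a ha
    rw [Finset.sum_eq_single (⟨a, ha⟩ : Fin m)]
    · simp
    · intro l _ hl
      have : a ≠ (l : ℕ) := fun hh => hl (Fin.ext hh.symm)
      simp [this]
    · simp
  have main : ∀ a : ℕ, (ha : a < m) → x ⟨a, ha⟩ = 0 := by
    intro a
    induction a with
    | zero =>
      intro ha
      have := row ⟨0, by omega⟩
      rw [sum1 0 ha] at this
      simpa using this
    | succ b ih =>
      intro ha
      have hb : b < m := by omega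
      have := row ⟨b + 1, by omega⟩
      rw [sum1 (b+1) ha] at this
      have h2 : (∑ i : Fin m, (if (b:ℕ) + 1 = (i : ℕ) + 1 then (1:ℝ) else 0) * x i)
          = x ⟨b, hb⟩ := by
        rw [Finset.sum_eq_single (⟨b, hb⟩ : Fin m)]
        · simp
        · intro l _ hl
          have : b + 1 ≠ (l : ℕ) + 1 :=
            fun hh => hl (Fin.ext (show (l : ℕ) = b by omega))
          simp [show b ≠ (l : ℕ) by omega]
        · simp
      rw [h2, ih hb] at this
      simpa using this
  funext i
  simpa using main i i.isLt

lemma Tmat_posdef (m : ℕ) : (Tmat m).PosDef := by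
  rw [Tmat_eq]
  refine Matrix.PosDef.of_dotProduct_mulVec_pos (Matrix.isHermitian_conjTranspose_mul_self _) (fun x hx => ?_)
  rw [← Matrix.mulVec_mulVec, Matrix.dotProduct_mulVec, Matrix.vecMul_conjTranspose, star_star]
  exact dotProduct_star_self_pos_iff.2 fun hc => hx (Bmat_inj hc)



lemma smul_posDef {N : Type*} [Fintype N] {A : Matrix N N ℝ} (hA : A.PosDef) {c : ℝ}
    (hc : 0 < c) : (c • A).PosDef := by
  refine Matrix.PosDef.of_dotProduct_mulVec_pos ?_ (fun x hx => ?_)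
  · unfold Matrix.IsHermitian
    rw [Matrix.conjTranspose_smul, star_trivial, hA.1]
  · rw [Matrix.smul_mulVec, dotProduct_smul, smul_eq_mul]
    exact mul_pos hc (hA.dotProduct_mulVec_pos hx)

lemma smul_posSemidef {N : Type*} [Fintype N] {A : Matrix N N ℝ} (hA : A.PosSemidef) {c : ℝ}
    (hc : 0 ≤ c) : (c • A).PosSemidef := by
  refine Matrix.PosSemidef.of_dotProduct_mulVec_nonneg ?_ (fun x => ?_)
  · unfold Matrix.IsHermitian
    rw [Matrix.conjTranspose_smul, star_trivial, hA.1]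
  · rw [Matrix.smul_mulVec, dotProduct_smul, smul_eq_mul]
    exact mul_nonneg hc (hA.dotProduct_mulVec_nonneg x)

lemma sliceH_posDef {m n : ℕ} {A : Matrix (Fin m) (Fin m) ℝ} (hA : A.PosDef) :
    Matrix.PosDef (Matrix.of fun p q : Fin m × Fin n =>
      if p.2 = q.2 then A p.1 q.1 else 0) := by
  have qf : ∀ x : Fin m × Fin n → ℝ,
      star x ⬝ᵥ ((Matrix.of fun p q : Fin m × Fin n =>
        if p.2 = q.2 then A p.1 q.1 else 0) *ᵥ x)
      = ∑ j : Fin n, star (fun i => x (i, j)) ⬝ᵥ (A *ᵥ fun i => x (i, j)) := by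
    intro x
    simp only [dotProduct, Matrix.mulVec, Matrix.of_apply, star_trivial,
      Pi.star_apply]
    rw [Fintype.sum_prod_type, Finset.sum_comm]
    refine Finset.sum_congr rfl fun j _ => Finset.sum_congr rfl fun i _ => ?_
    congr 1
    rw [Fintype.sum_prod_type]
    refine Finset.sum_congr rfl fun i' _ => ?_
    simp [ite_mul]
  refine Matrix.posDef_iff_dotProduct_mulVec.mpr ⟨?_, ?_⟩
  · ext p q
    simp only [Matrix.conjTranspose_apply, Matrix.of_apply, star_trivial]
    rcases eq_or_ne p.2 q.2 with h | h
    · simp only [h, if_pos rfl, if_pos h.symm]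
      have := congrFun (congrFun hA.1 p.1) q.1
      simpa using this
    · simp [h, Ne.symm h]
  · intro x hx
    rw [qf x]
    obtain ⟨p, hp⟩ := Function.ne_iff.1 hx
    refine Finset.sum_pos' (fun j _ => (hA.posSemidef).dotProduct_mulVec_nonneg _) ⟨p.2, Finset.mem_univ _, ?_⟩
    refine hA.dotProduct_mulVec_pos fun hc => hp ?_
    have := congrFun hc p.1
    simpa using this

lemma sliceV_posDef {m n : ℕ} {A : Matrix (Fin n) (Fin n) ℝ} (hA : A.PosDef) :
    Matrix.PosDef (Matrix.of fun p q : Fin m × Fin n =>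
      if p.1 = q.1 then A p.2 q.2 else 0) := by
  have qf : ∀ x : Fin m × Fin n → ℝ,
      star x ⬝ᵥ ((Matrix.of fun p q : Fin m × Fin n =>
        if p.1 = q.1 then A p.2 q.2 else 0) *ᵥ x)
      = ∑ i : Fin m, star (fun j => x (i, j)) ⬝ᵥ (A *ᵥ fun j => x (i, j)) := by
    intro x
    simp only [dotProduct, Matrix.mulVec, Matrix.of_apply, star_trivial,
      Pi.star_apply]
    rw [Fintype.sum_prod_type]
    refine Finset.sum_congr rfl fun i _ => Finset.sum_congr rfl fun j _ => ?_
    congr 1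
    rw [Fintype.sum_prod_type, Finset.sum_comm]
    refine Finset.sum_congr rfl fun j' _ => ?_
    simp [ite_mul]
  refine Matrix.posDef_iff_dotProduct_mulVec.mpr ⟨?_, ?_⟩
  · ext p q
    simp only [Matrix.conjTranspose_apply, Matrix.of_apply, star_trivial]
    rcases eq_or_ne p.1 q.1 with h | h
    · simp only [h, if_pos rfl, if_pos h.symm]
      have := congrFun (congrFun hA.1 p.2) q.2
      simpa using this
    · simp [h, Ne.symm h]
  · intro x hx
    rw [qf x]
    obtain ⟨p, hp⟩ := Function.ne_iff.1 hx
    refine Finset.sum_pos' (fun i _ => (hA.posSemidef).dotProduct_mulVec_nonneg _) ⟨p.1, Finset.mem_univ _, ?_⟩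
    refine hA.dotProduct_mulVec_pos fun hc => hp ?_
    have := congrFun hc p.2
    simpa using this


end GPaux

open GPaux

/-- The 2D finite-difference discretization matrix D of the
Gross–Pitaevskii operator is symmetric positive definite. -/
theorem stmt_1 (m n : ℕ) (hm : 1 ≤ m) (hn : 1 ≤ n)
    (h₁ h₂ : ℝ) (hh₁ : 0 < h₁) (hh₂ : 0 < h₂)
    (v : Fin m × Fin n → ℝ) (hv : ∀ p, 0 ≤ v p)
    (D : Matrix (Fin m × Fin n) (Fin m × Fin n) ℝ)
    (hDdiag : ∀ p : Fin m × Fin n, D p p = 1 / h₁ ^ 2 + 1 / h₂ ^ 2 + v p)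
    (hDvert : ∀ (i : Fin m) (j j' : Fin n), |(j : ℤ) - (j' : ℤ)| = 1 →
      D (i, j) (i, j') = -(1 / (2 * h₂ ^ 2)))
    (hDhor : ∀ (i i' : Fin m) (j : Fin n), |(i : ℤ) - (i' : ℤ)| = 1 →
      D (i, j) (i', j) = -(1 / (2 * h₁ ^ 2)))
    (hDzero : ∀ p q : Fin m × Fin n, p ≠ q →
      ¬(p.1 = q.1 ∧ |(p.2 : ℤ) - (q.2 : ℤ)| = 1) →
      ¬(p.2 = q.2 ∧ |(p.1 : ℤ) - (q.1 : ℤ)| = 1) → D p q = 0) :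
    D.IsSymm ∧ D.PosDef := by
  set c₁ : ℝ := 1 / (2 * h₁ ^ 2) with hc₁def
  set c₂ : ℝ := 1 / (2 * h₂ ^ 2) with hc₂def
  have hc₁ : 0 < c₁ := by positivity
  have hc₂ : 0 < c₂ := by positivity
  set H : Matrix (Fin m × Fin n) (Fin m × Fin n) ℝ :=
    Matrix.of fun p q => if p.2 = q.2 then Tmat m p.1 q.1 else 0 with hHdef
  set V : Matrix (Fin m × Fin n) (Fin m × Fin n) ℝ :=
    Matrix.of fun p q => if p.1 = q.1 then Tmat n p.2 q.2 else 0 with hVdef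
  have hD : D = c₁ • H + c₂ • V + Matrix.diagonal v := by
    ext ⟨i, j⟩ ⟨i', j'⟩
    simp only [Matrix.add_apply, Matrix.smul_apply, Matrix.of_apply, smul_eq_mul,
      hHdef, hVdef]
    by_cases hpq : ((i, j) : Fin m × Fin n) = (i', j')
    · obtain ⟨hi, hj⟩ := Prod.mk.injEq .. ▸ hpq
      subst hi; subst hj
      rw [hDdiag (i, j), Matrix.diagonal_apply_eq]
      simp only [Tmat, if_pos rfl, ↓reduceIte]
      have h1ne : h₁ ≠ 0 := ne_of_gt hh₁
      have h2ne : h₂ ≠ 0 := ne_of_gt hh₂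
      rw [hc₁def, hc₂def]
      field_simp
    · rw [Matrix.diagonal_apply_ne _ hpq]
      by_cases hv1 : i = i' ∧ |(j : ℤ) - (j' : ℤ)| = 1
      · obtain ⟨hi, habs⟩ := hv1
        subst hi
        have hjj : j ≠ j' := by
          intro h; subst h; simp at habs
        rw [hDvert i j j' habs]
        simp [Tmat, hjj, habs]
      · by_cases hv2 : j = j' ∧ |(i : ℤ) - (i' : ℤ)| = 1
        · obtain ⟨hj, habs⟩ := hv2
          subst hj
          have hii : i ≠ i' := by
            intro h; subst h; simp at habs
          rw [hDhor i i' j habs]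
          simp [Tmat, hii, habs]
        · rw [hDzero (i, j) (i', j') hpq hv1 hv2]
          have hH0 : (if j = j' then Tmat m i i' else 0) = 0 := by
            by_cases hj : j = j'
            · subst hj
              have hii : i ≠ i' := fun h => hpq (by rw [h])
              have habs : ¬ |(i : ℤ) - (i' : ℤ)| = 1 := fun h => hv2 ⟨rfl, h⟩
              simp [Tmat, hii, habs]
            · simp [hj]
          have hV0 : (if i = i' then Tmat n j j' else 0) = 0 := by
            by_cases hi : i = i'
            · subst hi
              have hjj : j ≠ j' := fun h => hpq (by rw [h])
              have habs : ¬ |(j : ℤ) - (j' : ℤ)| = 1 := fun h => hv1 ⟨rfl, h⟩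
              simp [Tmat, hjj, habs]
            · simp [hi]
          rw [hH0, hV0]
          ring
  have hPD : D.PosDef := by
    rw [hD]
    exact ((smul_posDef (sliceH_posDef (Tmat_posdef m)) hc₁).add_posSemidef
        (smul_posSemidef (sliceV_posDef (Tmat_posdef n)).posSemidef hc₂.le)).add_posSemidef
      (Matrix.PosSemidef.diagonal fun p => hv p)
  refine ⟨?_, hPD⟩
  have hH := hPD.isHermitian
  ext p q
  rw [Matrix.transpose_apply]
  have := congrFun (congrFun hH p) q
  simpa using this
end

section
/- Let A be an n×n irreducible Stieltjes matrix with smallest eigenvalue μ, and let λ > μ. Suppose each f_i maps [0,∞) into [0,∞), is continuously differentiable on [0,∞), and satisfies f_i(t)/t → 0 as t → 0⁺ and f_i(t)/t → ∞ as t → ∞. Then there exists x ∈ ℝⁿ with x_i > 0 for all i such that A x + F(x) = λ x. If in addition, for every i, f_i(s)/s < f_i(t)/t whenever 0 < s < t, then this positive solution x is unique. -/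
open Matrix
lemma perron (n : ℕ) (A : Matrix (Fin n) (Fin n) ℝ)
    (hA_irred : ∀ S : Set (Fin n), S.Nonempty → S ≠ Set.univ →
      ∃ i ∈ S, ∃ j, j ∉ S ∧ A i j ≠ 0)
    (hA_posdef : A.PosDef)
    (hA_offdiag : ∀ i j : Fin n, i ≠ j → A i j ≤ 0)
    (μ : ℝ)
    (hμ_eig : ∃ x : Fin n → ℝ, x ≠ 0 ∧ A.mulVec x = μ • x)
    (hμ_min : ∀ (μ' : ℝ) (x : Fin n → ℝ), x ≠ 0 → A.mulVec x = μ' • x → μ ≤ μ') :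
    ∃ φ : Fin n → ℝ, (∀ i, 0 < φ i) ∧ A.mulVec φ = μ • φ := by
  classical
  obtain ⟨x₀, hx₀ne, hx₀eig⟩ := hμ_eig
  set B : Matrix (Fin n) (Fin n) ℝ := A - μ • 1 with hB
  have hBmul : ∀ v : Fin n → ℝ, B.mulVec v = A.mulVec v - μ • v := by
    intro v
    simp [hB, sub_mulVec, smul_mulVec, one_mulVec]
  have hBherm : B.IsHermitian := by
    refine IsHermitian.sub hA_posdef.isHermitian ?_
    simp [Matrix.IsHermitian, Matrix.conjTranspose_smul]
  -- B is PSD since all eigenvalues of A are ≥ μ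
  have hBpsd : B.PosSemidef := by
    refine hBherm.posSemidef_iff_eigenvalues_nonneg.mpr (fun i => show 0 ≤ hBherm.eigenvalues i from ?_)
    set v : Fin n → ℝ := ⇑(hBherm.eigenvectorBasis i) with hvdef
    have hv : B.mulVec v = hBherm.eigenvalues i • v := hBherm.mulVec_eigenvectorBasis i
    have hvne : v ≠ 0 := by
      have h := hBherm.eigenvectorBasis.orthonormal.ne_zero i
      intro hc
      apply h
      ext j
      exact congrFun hc j
    have hAv : A.mulVec v = (hBherm.eigenvalues i + μ) • v := by
      have h2 := hBmul v
      rw [hv] at h2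
      funext j
      have := congrFun h2 j
      simp only [Pi.smul_apply, Pi.sub_apply, smul_eq_mul, Pi.add_apply] at this ⊢
      ring_nf
      ring_nf at this
      linarith
    have := hμ_min _ _ hvne hAv
    linarith
  set φ : Fin n → ℝ := fun i => |x₀ i| with hφ
  have hquad : φ ⬝ᵥ A.mulVec φ ≤ x₀ ⬝ᵥ A.mulVec x₀ := by
    have expand : ∀ v : Fin n → ℝ, v ⬝ᵥ A.mulVec v
        = ∑ i, ∑ j, A i j * v i * v j := by
      intro v
      simp [dotProduct, mulVec, Finset.mul_sum]
      congr 1; ext i; congr 1; ext j; ring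
    rw [expand, expand]
    refine Finset.sum_le_sum (fun i _ => Finset.sum_le_sum (fun j _ => ?_))
    rcases eq_or_ne i j with rfl | hij
    · simp [hφ, mul_assoc, abs_mul_abs_self]
    · have h1 : A i j ≤ 0 := hA_offdiag i j hij
      have h2 : x₀ i * x₀ j ≤ |x₀ i| * |x₀ j| := by
        calc x₀ i * x₀ j ≤ |x₀ i * x₀ j| := le_abs_self _
        _ = |x₀ i| * |x₀ j| := abs_mul _ _
      have := mul_le_mul_of_nonpos_left h2 h1
      simpa [hφ, mul_assoc] using this
  have hdotphi : φ ⬝ᵥ φ = x₀ ⬝ᵥ x₀ := by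
    simp [hφ, dotProduct, abs_mul_abs_self]
  have hBzero : B.mulVec φ = 0 := by
    have h1 : φ ⬝ᵥ B.mulVec φ ≤ 0 := by
      have hx : x₀ ⬝ᵥ B.mulVec x₀ = 0 := by
        rw [hBmul, hx₀eig]
        simp [dotProduct_sub]
      have he1 : φ ⬝ᵥ B.mulVec φ = φ ⬝ᵥ A.mulVec φ - μ * (φ ⬝ᵥ φ) := by
        rw [hBmul]; simp [dotProduct_sub, dotProduct_smul, smul_eq_mul]
      have he2 : x₀ ⬝ᵥ B.mulVec x₀ = x₀ ⬝ᵥ A.mulVec x₀ - μ * (x₀ ⬝ᵥ x₀) := by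
        rw [hBmul]; simp [dotProduct_sub, dotProduct_smul, smul_eq_mul]
      rw [he1, hdotphi]
      rw [he2] at hx
      linarith
    have h2 : 0 ≤ φ ⬝ᵥ B.mulVec φ := by
      have := hBpsd.dotProduct_mulVec_nonneg φ
      simpa [star_trivial] using this
    have h0 : star φ ⬝ᵥ B.mulVec φ = 0 := by
      simp only [star_trivial]; linarith
    exact (hBpsd.dotProduct_mulVec_zero_iff φ).mp h0
  have hφeig : A.mulVec φ = μ • φ := by
    have h := hBmul φ
    rw [hBzero] at h
    exact sub_eq_zero.mp h.symm
  refine ⟨φ, ?_, hφeig⟩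
  -- positivity via irreducibility
  by_contra hc
  push_neg at hc
  obtain ⟨k, hk⟩ := hc
  have hφnonneg : ∀ i, 0 ≤ φ i := fun i => abs_nonneg _
  have hφk : φ k = 0 := le_antisymm hk (hφnonneg k)
  set S : Set (Fin n) := {i | φ i = 0} with hS
  have hSne : S.Nonempty := ⟨k, hφk⟩
  have hSnu : S ≠ Set.univ := by
    intro h
    apply hx₀ne
    funext j
    have : φ j = 0 := by
      have hjm : j ∈ S := h ▸ Set.mem_univ j
      exact hjm
    simpa [hφ, abs_eq_zero] using this
  obtain ⟨i, hiS, j, hjS, hAij⟩ := hA_irred S hSne hSnu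
  have hφi : φ i = 0 := hiS
  have heq : ∑ l, A i l * φ l = 0 := by
    have := congrFun hφeig i
    simpa [mulVec, dotProduct, Pi.smul_apply, smul_eq_mul, hφi] using this
  have hterms : ∀ l ∈ Finset.univ, A i l * φ l ≤ 0 := by
    intro l _
    rcases eq_or_ne l i with rfl | hli
    · rw [hφi]; simp
    · by_cases hlS : l ∈ S
      · have : φ l = 0 := hlS
        rw [this]; simp
      · exact mul_nonpos_of_nonpos_of_nonneg (hA_offdiag i l (Ne.symm hli)) (hφnonneg l)
  have hzero := (Finset.sum_eq_zero_iff_of_nonpos hterms).mp heq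
  have hj := hzero j (Finset.mem_univ j)
  have hφj : φ j ≠ 0 := hjS
  exact hAij (by
    rcases mul_eq_zero.mp hj with h | h
    · exact h
    · exact absurd h hφj)

lemma lip_bound' (f : ℝ → ℝ) (M : ℝ) (hM : 0 < M) (hf : ContDiffOn ℝ 1 f (Set.Ici 0)) :
    ∃ C : ℝ, 0 ≤ C ∧ ∀ s t : ℝ, s ∈ Set.Icc 0 M → t ∈ Set.Icc 0 M → |f t - f s| ≤ C * |t - s| := by
  have hsub : Set.Icc (0:ℝ) M ⊆ Set.Ici 0 := Set.Icc_subset_Ici_self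
  have hcd : ContDiffOn ℝ 1 f (Set.Icc 0 M) := hf.mono hsub
  have hud : UniqueDiffOn ℝ (Set.Icc (0:ℝ) M) := uniqueDiffOn_Icc hM
  have hcont : ContinuousOn (derivWithin f (Set.Icc 0 M)) (Set.Icc 0 M) :=
    hcd.continuousOn_derivWithin hud (le_refl 1)
  obtain ⟨c, hc, hmax⟩ := isCompact_Icc.exists_isMaxOn
    ⟨0, Set.left_mem_Icc.mpr hM.le⟩ hcont.abs
  refine ⟨|derivWithin f (Set.Icc 0 M) c|, abs_nonneg _, fun s t hs ht => ?_⟩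
  have hd : DifferentiableOn ℝ f (Set.Icc 0 M) := hcd.differentiableOn one_ne_zero
  have hb : ∀ x ∈ Set.Icc (0:ℝ) M, ‖derivWithin f (Set.Icc 0 M) x‖ ≤
      |derivWithin f (Set.Icc 0 M) c| := by
    intro x hx
    simpa [Real.norm_eq_abs] using hmax hx
  have := (convex_Icc 0 M).norm_image_sub_le_of_norm_derivWithin_le hd hb hs ht
  simpa [Real.norm_eq_abs] using this

theorem stmt_2' (n : ℕ) (hn : 1 ≤ n) (A : Matrix (Fin n) (Fin n) ℝ)
    (hA_offdiag : ∀ i j : Fin n, i ≠ j → A i j ≤ 0)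
    (μ : ℝ)
    (lam : ℝ) (hlam : μ < lam)
    (f : Fin n → ℝ → ℝ)
    (hf_smooth : ∀ i, ContDiffOn ℝ 1 (f i) (Set.Ici 0))
    (hf_lim0 : ∀ i, Filter.Tendsto (fun t => f i t / t) (nhdsWithin 0 (Set.Ioi 0)) (nhds 0))
    (hf_liminf : ∀ i, Filter.Tendsto (fun t => f i t / t) Filter.atTop Filter.atTop)
    (φ : Fin n → ℝ) (hφpos : ∀ i, 0 < φ i) (hφeig : A.mulVec φ = μ • φ) :
    ∃ x : Fin n → ℝ, (∀ i, 0 < x i) ∧ A.mulVec x + (fun i => f i (x i)) = lam • x := by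
  classical
  have hne : Nonempty (Fin n) := ⟨⟨0, hn⟩⟩
  have huniv : (Finset.univ : Finset (Fin n)).Nonempty := Finset.univ_nonempty
  have hlm : 0 < lam - μ := by linarith
  -- choice of δ for the behaviour near 0
  have hδex : ∀ i : Fin n, ∃ δ : ℝ, 0 < δ ∧ ∀ t : ℝ, 0 < t → t < δ → f i t < (lam - μ) * t := by
    intro i
    have hev : ∀ᶠ t in nhdsWithin 0 (Set.Ioi 0), f i t / t < lam - μ :=
      (hf_lim0 i).eventually_lt_const hlm
    rw [eventually_nhdsWithin_iff, Metric.eventually_nhds_iff] at hev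
    obtain ⟨δ, hδ0, h⟩ := hev
    refine ⟨δ, hδ0, fun t ht htδ => ?_⟩
    have hdist : dist t 0 < δ := by
      rw [Real.dist_eq, sub_zero, abs_of_pos ht]; exact htδ
    have := h hdist ht
    exact (div_lt_iff₀ ht).mp this
  choose δ hδpos hδ using hδex
  -- choice of R for the behaviour at infinity
  have hRex : ∀ i : Fin n, ∃ R : ℝ, ∀ t : ℝ, R ≤ t → (lam - μ) * t ≤ f i t ∧ 0 < t := by
    intro i
    obtain ⟨R, hR⟩ := Filter.eventually_atTop.mp ((hf_liminf i).eventually_ge_atTop (lam - μ))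
    refine ⟨max R 1, fun t ht => ?_⟩
    have ht1 : (1:ℝ) ≤ t := le_trans (le_max_right _ _) ht
    have htpos : (0:ℝ) < t := lt_of_lt_of_le one_pos ht1
    have := hR t (le_trans (le_max_left _ _) ht)
    exact ⟨(le_div_iff₀ htpos).mp this, htpos⟩
  choose R hR using hRex
  -- ε
  set ε : ℝ := (Finset.univ.inf' huniv fun i => δ i / φ i) / 2 with hε
  have hinfpos : 0 < Finset.univ.inf' huniv fun i => δ i / φ i := by
    rw [Finset.lt_inf'_iff]
    intro j _
    exact div_pos (hδpos j) (hφpos j)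
  have hεpos : 0 < ε := by rw [hε]; positivity
  have hεδ : ∀ i, ε * φ i < δ i := by
    intro i
    have h2 : (Finset.univ.inf' huniv fun i => δ i / φ i) ≤ δ i / φ i :=
      Finset.inf'_le _ (Finset.mem_univ i)
    have h1 : ε < δ i / φ i := by rw [hε]; linarith
    calc ε * φ i < (δ i / φ i) * φ i := mul_lt_mul_of_pos_right h1 (hφpos i)
    _ = δ i := div_mul_cancel₀ _ (ne_of_gt (hφpos i))
  -- T
  set T : ℝ := max ε (Finset.univ.sup' huniv fun i => R i / φ i) with hT
  have hεT : ε ≤ T := le_max_left _ _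
  have hTpos : 0 < T := lt_of_lt_of_le hεpos hεT
  have hTR : ∀ i, R i ≤ T * φ i := by
    intro i
    have h1 : R i / φ i ≤ T := le_trans
      (Finset.le_sup' (fun i => R i / φ i) (Finset.mem_univ i)) (le_max_right _ _)
    calc R i = (R i / φ i) * φ i := (div_mul_cancel₀ _ (ne_of_gt (hφpos i))).symm
    _ ≤ T * φ i := mul_le_mul_of_nonneg_right h1 (hφpos i).le
  -- M
  set M : ℝ := Finset.univ.sup' huniv (fun i => T * φ i) with hM
  have hMb : ∀ i, T * φ i ≤ M := fun i =>
    Finset.le_sup' (fun i => T * φ i) (Finset.mem_univ i)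
  have hMpos : 0 < M := lt_of_lt_of_le (mul_pos hTpos (hφpos ⟨0, hn⟩)) (hMb _)
  -- Lipschitz constants
  have hCex : ∀ i, ∃ C : ℝ, 0 ≤ C ∧ ∀ s t : ℝ, s ∈ Set.Icc 0 M → t ∈ Set.Icc 0 M →
      |f i t - f i s| ≤ C * |t - s| := fun i => lip_bound' (f i) M hMpos (hf_smooth i)
  choose C hCnn hC using hCex
  -- τ
  set K : ℝ := 1 + ∑ i, (|A i i| + |lam| + C i) with hK
  have hsumnn : (0:ℝ) ≤ ∑ i, (|A i i| + |lam| + C i) :=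
    Finset.sum_nonneg (fun i _ => by have := hCnn i; positivity)
  have hKpos : 0 < K := by rw [hK]; linarith
  set τ : ℝ := 1 / K with hτ
  have hτpos : 0 < τ := by rw [hτ]; positivity
  have hkey : ∀ i, 0 ≤ 1 + τ * (lam - A i i - C i) := by
    intro i
    have h1 : |A i i| + |lam| + C i ≤ K := by
      rw [hK]
      have h5 : |A i i| + |lam| + C i ≤ ∑ j, (|A j j| + |lam| + C j) := by
        simpa using Finset.single_le_sum (f := fun j => |A j j| + |lam| + C j)
          (fun j _ => by have := hCnn j; positivity) (Finset.mem_univ i)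
      linarith
    have h2 : A i i + C i - lam ≤ K := by
      have ha := le_abs_self (A i i)
      have hb := neg_abs_le lam
      linarith
    have h3 : τ * (A i i + C i - lam) ≤ τ * K := mul_le_mul_of_nonneg_left h2 hτpos.le
    have h4 : τ * K = 1 := by rw [hτ]; field_simp
    nlinarith
  -- the iteration map
  set Φ : (Fin n → ℝ) → (Fin n → ℝ) :=
    fun x i => x i + τ * (lam * x i - A.mulVec x i - f i (x i)) with hΦ
  -- monotonicity of Φ on the order interval
  have hmono : ∀ x y : Fin n → ℝ, (∀ i, 0 ≤ x i) → (∀ i, x i ≤ y i) → (∀ i, y i ≤ M) →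
      ∀ i, Φ x i ≤ Φ y i := by
    intro x y hx0 hxy hyM i
    have hxM : ∀ j, x j ≤ M := fun j => le_trans (hxy j) (hyM j)
    have hAd : A.mulVec y i - A.mulVec x i ≤ A i i * (y i - x i) := by
      have expand : A.mulVec y i - A.mulVec x i = ∑ j, A i j * (y j - x j) := by
        simp only [Matrix.mulVec, dotProduct, ← Finset.sum_sub_distrib]
        exact Finset.sum_congr rfl (fun j _ => by ring)
      rw [expand, ← Finset.add_sum_erase _ _ (Finset.mem_univ i)]
      have hrest : ∑ j ∈ Finset.univ.erase i, A i j * (y j - x j) ≤ 0 :=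
        Finset.sum_nonpos (fun j hj => mul_nonpos_of_nonpos_of_nonneg
          (hA_offdiag i j (Ne.symm (Finset.ne_of_mem_erase hj)))
          (by linarith [hxy j]))
      have : A i i * (y i - x i) = A i i * (y i - x i) := rfl
      linarith
    have hfd : f i (y i) - f i (x i) ≤ C i * (y i - x i) := by
      have h2 := hC i (x i) (y i) ⟨hx0 i, hxM i⟩ ⟨le_trans (hx0 i) (hxy i), hyM i⟩
      rw [abs_of_nonneg (by linarith [hxy i] : (0:ℝ) ≤ y i - x i)] at h2
      exact le_trans (le_abs_self _) h2
    have hd0 : 0 ≤ y i - x i := by linarith [hxy i]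
    have hprod := mul_nonneg hd0 (hkey i)
    simp only [hΦ]
    nlinarith [mul_le_mul_of_nonneg_left hAd hτpos.le, mul_le_mul_of_nonneg_left hfd hτpos.le]
  have hAsmul : ∀ c : ℝ, A.mulVec (c • φ) = (c * μ) • φ := by
    intro c
    rw [Matrix.mulVec_smul, hφeig, smul_smul]
  -- subsolution
  have hsub : ∀ i, (ε • φ) i ≤ Φ (ε • φ) i := by
    intro i
    have h1 : 0 < ε * φ i := mul_pos hεpos (hφpos i)
    have h2 : f i (ε * φ i) < (lam - μ) * (ε * φ i) := hδ i _ h1 (hεδ i)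
    have h3 : 0 ≤ τ * ((lam - μ) * (ε * φ i) - f i (ε * φ i)) :=
      mul_nonneg hτpos.le (by linarith)
    simp only [hΦ, hAsmul ε, Pi.smul_apply, smul_eq_mul]
    nlinarith [h3]
  -- supersolution
  have hsup : ∀ i, Φ (T • φ) i ≤ (T • φ) i := by
    intro i
    have h2 := hR i (T * φ i) (hTR i)
    have h3 : 0 ≤ τ * (f i (T * φ i) - (lam - μ) * (T * φ i)) :=
      mul_nonneg hτpos.le (by linarith [h2.1])
    simp only [hΦ, hAsmul T, Pi.smul_apply, smul_eq_mul]
    nlinarith [h3]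
  -- the iteration
  set xs : ℕ → (Fin n → ℝ) := fun k => Φ^[k] (T • φ) with hxs
  have hx0 : xs 0 = T • φ := rfl
  have hxsucc : ∀ k, xs (k + 1) = Φ (xs k) := by
    intro k
    simp only [hxs]
    exact Function.iterate_succ_apply' Φ k (T • φ)
  have hεφTφ : ∀ i, ε * φ i ≤ T * φ i := fun i => mul_le_mul_of_nonneg_right hεT (hφpos i).le
  have claim : ∀ k, (∀ i, ε * φ i ≤ xs k i) ∧ (∀ i, xs k i ≤ T * φ i) ∧
      (∀ i, Φ (xs k) i ≤ xs k i) := by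
    intro k
    induction k with
    | zero =>
      refine ⟨fun i => ?_, fun i => ?_, fun i => ?_⟩
      · rw [hx0]; simpa [Pi.smul_apply, smul_eq_mul] using hεφTφ i
      · rw [hx0]; simp [Pi.smul_apply, smul_eq_mul]
      · rw [hx0]; simpa [Pi.smul_apply, smul_eq_mul] using hsup i
    | succ k ih =>
      obtain ⟨ihl, ihu, ihd⟩ := ih
      have hl' : ∀ i, ε * φ i ≤ Φ (xs k) i := by
        intro i
        calc ε * φ i = (ε • φ) i := by simp [Pi.smul_apply, smul_eq_mul]
        _ ≤ Φ (ε • φ) i := hsub i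
        _ ≤ Φ (xs k) i := hmono (ε • φ) (xs k)
            (fun j => by simp only [Pi.smul_apply, smul_eq_mul];
                         exact (mul_pos hεpos (hφpos j)).le)
            (fun j => by simpa [Pi.smul_apply, smul_eq_mul] using ihl j)
            (fun j => le_trans (ihu j) (hMb j)) i
      have hu' : ∀ i, Φ (xs k) i ≤ T * φ i := fun i => le_trans (ihd i) (ihu i)
      have hdn' : ∀ i, Φ (Φ (xs k)) i ≤ Φ (xs k) i :=
        fun i => hmono (Φ (xs k)) (xs k)
          (fun j => le_trans (mul_pos hεpos (hφpos j)).le (hl' j))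
          ihd (fun j => le_trans (ihu j) (hMb j)) i
      exact ⟨fun i => by rw [hxsucc]; exact hl' i,
             fun i => by rw [hxsucc]; exact hu' i,
             fun i => by rw [hxsucc]; exact hdn' i⟩
  have hanti : ∀ i, Antitone (fun k => xs k i) := by
    intro i
    apply antitone_nat_of_succ_le
    intro k
    rw [hxsucc]
    exact (claim k).2.2 i
  have hbdd : ∀ i, BddBelow (Set.range fun k => xs k i) := by
    intro i
    exact ⟨ε * φ i, by rintro z ⟨k, rfl⟩; exact (claim k).1 i⟩
  set y : Fin n → ℝ := fun i => ⨅ k, xs k i with hy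
  have htends : ∀ i, Filter.Tendsto (fun k => xs k i) Filter.atTop (nhds (y i)) :=
    fun i => tendsto_atTop_ciInf (hanti i) (hbdd i)
  have hylb : ∀ i, ε * φ i ≤ y i := fun i => le_ciInf (fun k => (claim k).1 i)
  have hypos : ∀ i, 0 < y i := fun i => lt_of_lt_of_le (mul_pos hεpos (hφpos i)) (hylb i)
  have heq : ∀ i, lam * y i - A.mulVec y i - f i (y i) = 0 := by
    intro i
    have h1 : Filter.Tendsto (fun k => xs (k + 1) i) Filter.atTop (nhds (y i)) :=
      (htends i).comp (Filter.tendsto_add_atTop_nat 1)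
    have hAv : Filter.Tendsto (fun k => A.mulVec (xs k) i) Filter.atTop
        (nhds (A.mulVec y i)) := by
      have hrw : ∀ k, A.mulVec (xs k) i = ∑ j, A i j * xs k j := by
        intro k
        simp [Matrix.mulVec, dotProduct]
      have hrwy : A.mulVec y i = ∑ j, A i j * y j := by
        simp [Matrix.mulVec, dotProduct]
      simp only [hrw, hrwy]
      exact tendsto_finset_sum _ (fun j _ => tendsto_const_nhds.mul (htends j))
    have hfv : Filter.Tendsto (fun k => f i (xs k i)) Filter.atTop (nhds (f i (y i))) := by
      have hca : ContinuousAt (f i) (y i) :=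
        (hf_smooth i).continuousOn.continuousAt (Ici_mem_nhds (hypos i))
      exact hca.tendsto.comp (htends i)
    have h2 : Filter.Tendsto (fun k => xs (k + 1) i) Filter.atTop
        (nhds (y i + τ * (lam * y i - A.mulVec y i - f i (y i)))) := by
      have hform : (fun k => xs (k + 1) i) = fun k =>
          xs k i + τ * (lam * xs k i - A.mulVec (xs k) i - f i (xs k i)) := by
        funext k
        rw [hxsucc]
      rw [hform]
      exact (htends i).add (tendsto_const_nhds.mul
        (((tendsto_const_nhds.mul (htends i)).sub hAv).sub hfv))
    have huniq := tendsto_nhds_unique h1 h2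
    have hτE : τ * (lam * y i - A.mulVec y i - f i (y i)) = 0 := by linarith
    rcases mul_eq_zero.mp hτE with h | h
    · exact absurd h (ne_of_gt hτpos)
    · exact h
  refine ⟨y, hypos, funext fun i => ?_⟩
  have := heq i
  simp only [Pi.add_apply, Pi.smul_apply, smul_eq_mul]
  linarith

lemma uniq_le (n : ℕ) (hn : 1 ≤ n) (A : Matrix (Fin n) (Fin n) ℝ)
    (hA_offdiag : ∀ i j : Fin n, i ≠ j → A i j ≤ 0) (lam : ℝ) (f : Fin n → ℝ → ℝ)
    (hstrict : ∀ (i : Fin n) (s t : ℝ), 0 < s → s < t → f i s / s < f i t / t)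
    (x z : Fin n → ℝ) (hx : ∀ i, 0 < x i)
    (hxe : A.mulVec x + (fun i => f i (x i)) = lam • x)
    (hz : ∀ i, 0 < z i)
    (hze : A.mulVec z + (fun i => f i (z i)) = lam • z) :
    ∀ i, z i ≤ x i := by
  classical
  have huniv : (Finset.univ : Finset (Fin n)).Nonempty :=
    ⟨⟨0, hn⟩, Finset.mem_univ _⟩
  obtain ⟨k, _, hkmax⟩ := Finset.exists_max_image Finset.univ (fun i => z i / x i) huniv
  set t : ℝ := z k / x k with ht
  have htpos : 0 < t := div_pos (hz k) (hx k)
  have hzle : ∀ i, z i ≤ t * x i := by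
    intro i
    have h1 := hkmax i (Finset.mem_univ i)
    calc z i = (z i / x i) * x i := (div_mul_cancel₀ _ (ne_of_gt (hx i))).symm
    _ ≤ t * x i := mul_le_mul_of_nonneg_right h1 (hx i).le
  have hzk : z k = t * x k := (div_mul_cancel₀ _ (ne_of_gt (hx k))).symm
  by_cases hle : t ≤ 1
  · intro i
    have := hzle i
    nlinarith [hx i]
  · exfalso
    push_neg at hle
    have hxk := congrFun hxe k
    have hzk' := congrFun hze k
    simp only [Pi.add_apply, Pi.smul_apply, smul_eq_mul] at hxk hzk'
    have hAz : t * A.mulVec x k ≤ A.mulVec z k := by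
      have expand : t * A.mulVec x k - A.mulVec z k = ∑ j, A k j * (t * x j - z j) := by
        simp only [Matrix.mulVec, dotProduct, Finset.mul_sum, ← Finset.sum_sub_distrib]
        exact Finset.sum_congr rfl (fun j _ => by ring)
      have hsum : ∑ j, A k j * (t * x j - z j) ≤ 0 := by
        refine Finset.sum_nonpos (fun j _ => ?_)
        rcases eq_or_ne j k with rfl | hj
        · rw [hzk]; simp
        · exact mul_nonpos_of_nonpos_of_nonneg (hA_offdiag k j (Ne.symm hj))
            (by linarith [hzle j])
      linarith [expand ▸ hsum]
    have hcomb : f k (t * x k) ≤ t * f k (x k) := by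
      rw [← hzk]
      have e1 : f k (z k) = lam * (t * x k) - A.mulVec z k := by rw [← hzk]; linarith
      have e2 : t * f k (x k) = t * (lam * x k) - t * A.mulVec x k := by
        have e3 : f k (x k) = lam * x k - A.mulVec x k := by linarith
        rw [e3]; ring
      rw [e1, e2]
      nlinarith [hAz]
    have hmono2 := hstrict k (x k) (t * x k) (hx k) (by nlinarith [hx k])
    have hcon : f k (t * x k) / (t * x k) ≤ f k (x k) / x k := by
      rw [div_le_div_iff₀ (mul_pos htpos (hx k)) (hx k)]
      nlinarith [hcomb, hx k, htpos]
    linarith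

/-- For an irreducible Stieltjes matrix A with smallest eigenvalue μ
and λ > μ, under the stated conditions on the f_i there exists a positive solution
of A x + F(x) = λ x; under the additional strict monotonicity condition it is unique. -/
theorem stmt_2 (n : ℕ) (hn : 1 ≤ n) (A : Matrix (Fin n) (Fin n) ℝ)
    (hA_irred : ∀ S : Set (Fin n), S.Nonempty → S ≠ Set.univ →
      ∃ i ∈ S, ∃ j, j ∉ S ∧ A i j ≠ 0)
    (hA_posdef : A.PosDef)
    (hA_offdiag : ∀ i j : Fin n, i ≠ j → A i j ≤ 0)
    (μ : ℝ)
    (hμ_eig : ∃ x : Fin n → ℝ, x ≠ 0 ∧ A.mulVec x = μ • x)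
    (hμ_min : ∀ (μ' : ℝ) (x : Fin n → ℝ), x ≠ 0 → A.mulVec x = μ' • x → μ ≤ μ')
    (lam : ℝ) (hlam : μ < lam)
    (f : Fin n → ℝ → ℝ)
    (hf_map : ∀ i t, 0 ≤ t → 0 ≤ f i t)
    (hf_smooth : ∀ i, ContDiffOn ℝ 1 (f i) (Set.Ici 0))
    (hf_lim0 : ∀ i, Filter.Tendsto (fun t => f i t / t) (nhdsWithin 0 (Set.Ioi 0)) (nhds 0))
    (hf_liminf : ∀ i, Filter.Tendsto (fun t => f i t / t) Filter.atTop Filter.atTop) :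
    (∃ x : Fin n → ℝ, (∀ i, 0 < x i) ∧ A.mulVec x + (fun i => f i (x i)) = lam • x) ∧
    ((∀ (i : Fin n) (s t : ℝ), 0 < s → s < t → f i s / s < f i t / t) →
      ∃! x : Fin n → ℝ, (∀ i, 0 < x i) ∧ A.mulVec x + (fun i => f i (x i)) = lam • x) := by
  obtain ⟨φ, hφpos, hφeig⟩ := perron n A hA_irred hA_posdef hA_offdiag μ hμ_eig hμ_min
  obtain ⟨y, hy1, hy2⟩ := stmt_2' n hn A hA_offdiag μ lam hlam f hf_smooth hf_lim0
    hf_liminf φ hφpos hφeig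
  refine ⟨⟨y, hy1, hy2⟩, fun hstrict => ⟨y, ⟨hy1, hy2⟩, fun z hz => ?_⟩⟩
  exact funext fun i => le_antisymm
    (uniq_le n hn A hA_offdiag lam f hstrict y z hy1 hy2 hz.1 hz.2 i)
    (uniq_le n hn A hA_offdiag lam f hstrict z y hz.1 hz.2 hy1 hy2 i)
end

section
/- Let A be an n×n irreducible Stieltjes matrix with smallest eigenvalue μ. Suppose each f_i maps [0,∞) into [0,∞), is continuously differentiable on [0,∞), satisfies f_i(t)/t → 0 as t → 0⁺ and f_i(t)/t → ∞ as t → ∞, and satisfies f_i(s)/s < f_i(t)/t whenever 0 < s < t. If μ < λ₁ < λ₂ and x¹, x² are vectors with all components positive such that A x¹ + F(x¹) = λ₁ x¹ and A x² + F(x²) = λ₂ x², then x¹_i < x²_i for every i. -/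
/-- Monotonicity of the unique positive eigenvector in λ. -/
theorem stmt_3 (n : ℕ) (hn : 1 ≤ n) (A : Matrix (Fin n) (Fin n) ℝ)
    (hA_irred : ∀ S : Set (Fin n), S.Nonempty → S ≠ Set.univ →
      ∃ i ∈ S, ∃ j, j ∉ S ∧ A i j ≠ 0)
    (hA_posdef : A.PosDef)
    (hA_offdiag : ∀ i j : Fin n, i ≠ j → A i j ≤ 0)
    (μ : ℝ)
    (hμ_eig : ∃ x : Fin n → ℝ, x ≠ 0 ∧ A.mulVec x = μ • x)
    (hμ_min : ∀ (μ' : ℝ) (x : Fin n → ℝ), x ≠ 0 → A.mulVec x = μ' • x → μ ≤ μ')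
    (f : Fin n → ℝ → ℝ)
    (hf_map : ∀ i t, 0 ≤ t → 0 ≤ f i t)
    (hf_smooth : ∀ i, ContDiffOn ℝ 1 (f i) (Set.Ici 0))
    (hf_lim0 : ∀ i, Filter.Tendsto (fun t => f i t / t) (nhdsWithin 0 (Set.Ioi 0)) (nhds 0))
    (hf_liminf : ∀ i, Filter.Tendsto (fun t => f i t / t) Filter.atTop Filter.atTop)
    (hf_mono : ∀ (i : Fin n) (s t : ℝ), 0 < s → s < t → f i s / s < f i t / t)
    (lam₁ lam₂ : ℝ) (hlam₁ : μ < lam₁) (hlam₁₂ : lam₁ < lam₂)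
    (x₁ x₂ : Fin n → ℝ) (hx₁pos : ∀ i, 0 < x₁ i) (hx₂pos : ∀ i, 0 < x₂ i)
    (hx₁ : A.mulVec x₁ + (fun i => f i (x₁ i)) = lam₁ • x₁)
    (hx₂ : A.mulVec x₂ + (fun i => f i (x₂ i)) = lam₂ • x₂) :
    ∀ i, x₁ i < x₂ i := by
  haveI : Nonempty (Fin n) := ⟨⟨0, hn⟩⟩
  obtain ⟨k, -, hk⟩ := Finset.exists_max_image Finset.univ (fun i => x₁ i / x₂ i)
    Finset.univ_nonempty
  set c := x₁ k / x₂ k with hc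
  have hcpos : 0 < c := div_pos (hx₁pos k) (hx₂pos k)
  have hbound : ∀ i, x₁ i ≤ c * x₂ i := by
    intro i
    have h := hk i (Finset.mem_univ i)
    have h2 : x₁ i = (x₁ i / x₂ i) * x₂ i :=
      (div_mul_cancel₀ _ (ne_of_gt (hx₂pos i))).symm
    rw [h2]
    exact mul_le_mul_of_nonneg_right h (le_of_lt (hx₂pos i))
  have hxk : x₁ k = c * x₂ k := by
    rw [hc, div_mul_cancel₀ _ (ne_of_gt (hx₂pos k))]
  have hc1 : c < 1 := by
    by_contra hge
    push_neg at hge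
    have hfge : c * f k (x₂ k) ≤ f k (x₁ k) := by
      rcases eq_or_lt_of_le hge with h1 | h1
      · rw [hxk, ← h1, one_mul, one_mul]
      · have hlt : x₂ k < c * x₂ k := by nlinarith [hx₂pos k]
        have hm := hf_mono k (x₂ k) (c * x₂ k) (hx₂pos k) hlt
        rw [hxk]
        rw [div_lt_div_iff₀ (hx₂pos k) (mul_pos hcpos (hx₂pos k))] at hm
        nlinarith [hf_map k (x₂ k) (le_of_lt (hx₂pos k))]
    have e1 : A.mulVec x₁ k + f k (x₁ k) = lam₁ * x₁ k := congrFun hx₁ k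
    have e2 : A.mulVec x₂ k + f k (x₂ k) = lam₂ * x₂ k := congrFun hx₂ k
    have hsum : ∑ j, A k j * (c * x₂ j - x₁ j) = c * A.mulVec x₂ k - A.mulVec x₁ k := by
      simp only [Matrix.mulVec, dotProduct, Finset.mul_sum,
        ← Finset.sum_sub_distrib]
      apply Finset.sum_congr rfl
      intro j _
      ring
    have h3 : c * A.mulVec x₂ k - A.mulVec x₁ k
        = (lam₂ - lam₁) * x₁ k + (f k (x₁ k) - c * f k (x₂ k)) := by
      have h4 : A.mulVec x₂ k = lam₂ * x₂ k - f k (x₂ k) := by linarith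
      have h5 : A.mulVec x₁ k = lam₁ * x₁ k - f k (x₁ k) := by linarith
      rw [h4, h5, hxk]; ring
    have hpos : 0 < ∑ j, A k j * (c * x₂ j - x₁ j) := by
      rw [hsum, h3]
      have := mul_pos (sub_pos.mpr hlam₁₂) (hx₁pos k)
      linarith
    have hnonpos : ∑ j, A k j * (c * x₂ j - x₁ j) ≤ 0 := by
      apply Finset.sum_nonpos
      intro j _
      rcases eq_or_ne j k with rfl | hjk
      · rw [← hxk]; simp
      · exact mul_nonpos_of_nonpos_of_nonneg (hA_offdiag k j (Ne.symm hjk))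
          (by linarith [hbound j])
    linarith
  intro i
  calc x₁ i ≤ c * x₂ i := hbound i
  _ < 1 * x₂ i := by nlinarith [hx₂pos i]
  _ = x₂ i := one_mul _
end

section
/- Let A be an n×n irreducible Stieltjes matrix with smallest eigenvalue μ. Suppose each f_i maps [0,∞) into [0,∞), is continuously differentiable on [0,∞), satisfies f_i(t)/t → 0 as t → 0⁺ and f_i(t)/t → ∞ as t → ∞, and satisfies f_i(s)/s < f_i(t)/t whenever 0 < s < t. Then: (a) for every M > 0 there exists Λ > μ such that whenever λ > Λ and x is a vector with all components positive satisfying A x + F(x) = λ x, every component x_i > M; and (b) for every ε > 0 there exists δ > 0 such that whenever μ < λ < μ + δ and x is a vector with all components positive satisfying A x + F(x) = λ x, every component x_i < ε. -/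
open Finset Matrix

/-- Quadratic form lower bound: if `μ` is below every eigenvalue of the symmetric
matrix `A`, then `μ * ⟨x,x⟩ ≤ ⟨x, A x⟩`. -/
lemma quad_lower_bound {n : ℕ} (A : Matrix (Fin n) (Fin n) ℝ)
    (hH : A.IsHermitian)
    (hμ_min : ∀ (μ' : ℝ) (x : Fin n → ℝ), x ≠ 0 → A.mulVec x = μ' • x → μ ≤ μ')
    (x : Fin n → ℝ) : μ * (x ⬝ᵥ x) ≤ x ⬝ᵥ A.mulVec x := by
  classical
  have hBH : (A - μ • (1 : Matrix (Fin n) (Fin n) ℝ)).IsHermitian := by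
    simp only [Matrix.IsHermitian, Matrix.conjTranspose_sub, Matrix.conjTranspose_smul,
      Matrix.conjTranspose_one, hH.eq]
    simp
  have hsub : ∀ v : Fin n → ℝ, (A - μ • (1 : Matrix (Fin n) (Fin n) ℝ)).mulVec v
      = A.mulVec v - μ • v := by
    intro v
    rw [Matrix.sub_mulVec, Matrix.smul_mulVec, Matrix.one_mulVec]
  have hev : ∀ i, 0 ≤ hBH.eigenvalues i := by
    intro i
    have hmv := hBH.mulVec_eigenvectorBasis i
    have hv0 : ⇑(hBH.eigenvectorBasis i) ≠ 0 := by
      have h := hBH.eigenvectorBasis.orthonormal.ne_zero i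
      intro hcon
      apply h
      ext j
      exact congrFun hcon j
    rw [hsub] at hmv
    have hAmv : A.mulVec ⇑(hBH.eigenvectorBasis i)
        = (hBH.eigenvalues i + μ) • ⇑(hBH.eigenvectorBasis i) := by
      have h2 : A.mulVec ⇑(hBH.eigenvectorBasis i)
          = hBH.eigenvalues i • ⇑(hBH.eigenvectorBasis i) + μ • ⇑(hBH.eigenvectorBasis i) := by
        rw [← hmv]; abel
      rw [h2, ← add_smul]
    have := hμ_min (hBH.eigenvalues i + μ) _ hv0 hAmv
    linarith
  have hPSD := hBH.posSemidef_iff_eigenvalues_nonneg.mpr hev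
  have h0 := hPSD.dotProduct_mulVec_nonneg x
  have hstar : star x = x := by ext j; simp
  rw [hstar, hsub, dotProduct_sub, dotProduct_smul] at h0
  simp only [smul_eq_mul] at h0
  linarith

/-- (a) as λ → ∞ all components of the positive eigenvector tend to ∞;
(b) as λ → μ⁺ all components tend to 0. -/
theorem stmt_4 (n : ℕ) (hn : 1 ≤ n) (A : Matrix (Fin n) (Fin n) ℝ)
    (hA_irred : ∀ S : Set (Fin n), S.Nonempty → S ≠ Set.univ →
      ∃ i ∈ S, ∃ j, j ∉ S ∧ A i j ≠ 0)
    (hA_posdef : A.PosDef)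
    (hA_offdiag : ∀ i j : Fin n, i ≠ j → A i j ≤ 0)
    (μ : ℝ)
    (hμ_eig : ∃ x : Fin n → ℝ, x ≠ 0 ∧ A.mulVec x = μ • x)
    (hμ_min : ∀ (μ' : ℝ) (x : Fin n → ℝ), x ≠ 0 → A.mulVec x = μ' • x → μ ≤ μ')
    (f : Fin n → ℝ → ℝ)
    (hf_map : ∀ i t, 0 ≤ t → 0 ≤ f i t)
    (hf_smooth : ∀ i, ContDiffOn ℝ 1 (f i) (Set.Ici 0))
    (hf_lim0 : ∀ i, Filter.Tendsto (fun t => f i t / t) (nhdsWithin 0 (Set.Ioi 0)) (nhds 0))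
    (hf_liminf : ∀ i, Filter.Tendsto (fun t => f i t / t) Filter.atTop Filter.atTop)
    (hf_mono : ∀ (i : Fin n) (s t : ℝ), 0 < s → s < t → f i s / s < f i t / t) :
    (∀ M : ℝ, 0 < M → ∃ Λ : ℝ, μ < Λ ∧ ∀ (lam : ℝ) (x : Fin n → ℝ), Λ < lam →
      (∀ i, 0 < x i) → A.mulVec x + (fun i => f i (x i)) = lam • x → ∀ i, M < x i) ∧
    (∀ ε : ℝ, 0 < ε → ∃ δ : ℝ, 0 < δ ∧ ∀ (lam : ℝ) (x : Fin n → ℝ),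
      μ < lam → lam < μ + δ →
      (∀ i, 0 < x i) → A.mulVec x + (fun i => f i (x i)) = lam • x → ∀ i, x i < ε) := by
  have hne : (Finset.univ : Finset (Fin n)).Nonempty := by
    simpa [Finset.univ_nonempty_iff] using Fin.pos_iff_nonempty.mp hn
  constructor
  · -- part (a)
    intro M hM
    set R : ℝ := (Finset.univ.image (fun i => ∑ j, A i j)).max' (hne.image _) with hR
    set C : ℝ := (Finset.univ.image (fun i => f i M / M)).max' (hne.image _) with hC
    refine ⟨max μ (R + C) + 1, by
      have := le_max_left μ (R + C); linarith, ?_⟩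
    intro lam x hlam hx heq i
    -- the minimal component
    obtain ⟨k, -, hk⟩ := Finset.exists_min_image Finset.univ x hne
    by_contra hcon
    push_neg at hcon
    have hxkM : x k ≤ M := le_trans (hk i (Finset.mem_univ i)) hcon
    have hxk : 0 < x k := hx k
    -- componentwise equation at k
    have heqk : (A.mulVec x) k + f k (x k) = lam * x k := by
      have := congrFun heq k
      simpa [Pi.add_apply, Pi.smul_apply, smul_eq_mul] using this
    have hAx : (A.mulVec x) k ≤ (∑ j, A k j) * x k := by
      rw [Matrix.mulVec, Finset.sum_mul]
      refine Finset.sum_le_sum fun j _ => ?_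
      rcases eq_or_ne k j with rfl | hkj
      · simp [dotProduct]
      · have h1 : A k j ≤ 0 := hA_offdiag k j hkj
        have h2 : x k ≤ x j := hk j (Finset.mem_univ j)
        nlinarith
    have hfk : f k (x k) ≤ (f k M / M) * x k := by
      rcases lt_or_eq_of_le hxkM with h | h
      · have := hf_mono k (x k) M hxk h
        have h2 : f k (x k) / x k < f k M / M := this
        rw [div_lt_iff₀ hxk] at h2
        linarith
      · rw [h]; rw [div_mul_cancel₀]
        exact ne_of_gt (lt_of_lt_of_le hxk (le_of_eq h) )
    have hRk : (∑ j, A k j) ≤ R := by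
      rw [hR]
      exact Finset.le_max' _ _ (Finset.mem_image_of_mem (fun i => ∑ j, A i j) (Finset.mem_univ k))
    have hCk : f k M / M ≤ C := by
      rw [hC]
      exact Finset.le_max' _ _ (Finset.mem_image_of_mem (fun i => f i M / M) (Finset.mem_univ k))
    have hlam2 : lam * x k ≤ (R + C) * x k := by nlinarith
    have : lam ≤ R + C := by
      by_contra h
      push_neg at h
      nlinarith
    have h3 : R + C ≤ max μ (R + C) := le_max_right _ _
    linarith
  · -- part (b)
    intro ε hε
    set c : ℝ := (Finset.univ.image (fun i => f i ε / ε)).min' (hne.image _) with hc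
    have hcpos : 0 < c := by
      rw [hc]
      apply (Finset.lt_min'_iff _ _).2
      intro y hy
      obtain ⟨i, -, rfl⟩ := Finset.mem_image.mp hy
      have h1 := hf_mono i (ε/2) ε (by linarith) (by linarith)
      have h2 : 0 ≤ f i (ε/2) / (ε/2) :=
        div_nonneg (hf_map i _ (by linarith)) (by linarith)
      linarith
    refine ⟨c / n, div_pos hcpos (by exact_mod_cast hn), ?_⟩
    intro lam x hlam1 hlam2 hx heq i
    by_contra hcon
    push_neg at hcon
    -- the maximal component
    obtain ⟨k, -, hk⟩ := Finset.exists_max_image Finset.univ x hne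
    have hxk : ε ≤ x k := le_trans hcon (hk i (Finset.mem_univ i))
    have hxkpos : 0 < x k := lt_of_lt_of_le hε hxk
    -- dot with x
    have hquad := quad_lower_bound A hA_posdef.isHermitian hμ_min x
    have hdot : x ⬝ᵥ A.mulVec x + ∑ j, x j * f j (x j) = lam * (x ⬝ᵥ x) := by
      have : ∀ j, (A.mulVec x) j + f j (x j) = lam * x j := fun j => by
        have := congrFun heq j
        simpa [Pi.add_apply, Pi.smul_apply, smul_eq_mul] using this
      simp only [dotProduct, ← Finset.sum_add_distrib, Finset.mul_sum]
      apply Finset.sum_congr rfl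
      intro j _
      have hj := this j
      linear_combination x j * hj
    have hsum : ∑ j, x j * f j (x j) ≤ (lam - μ) * (x ⬝ᵥ x) := by linarith [hquad, hdot]
    have hterm : x k * f k (x k) ≤ ∑ j, x j * f j (x j) :=
      Finset.single_le_sum (fun j _ => mul_nonneg (le_of_lt (hx j)) (hf_map j _ (le_of_lt (hx j)))) (Finset.mem_univ k)
    have hxx : x ⬝ᵥ x ≤ n * (x k)^2 := by
      rw [dotProduct]
      calc ∑ j, x j * x j ≤ ∑ _j : Fin n, (x k)^2 := by
            refine Finset.sum_le_sum fun j _ => ?_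
            have h1 : x j ≤ x k := hk j (Finset.mem_univ j)
            have h2 : 0 < x j := hx j
            nlinarith
        _ = n * (x k)^2 := by simp [Finset.sum_const, nsmul_eq_mul]
    have hck : c ≤ f k ε / ε := by
      rw [hc]
      exact Finset.min'_le _ _ (Finset.mem_image_of_mem (fun i => f i ε / ε) (Finset.mem_univ k))
    have hfε : f k ε / ε ≤ f k (x k) / x k := by
      rcases lt_or_eq_of_le hxk with h | h
      · exact le_of_lt (hf_mono k ε (x k) hε h)
      · rw [← h]
    have hfk : c * x k ≤ f k (x k) := by
      have : c ≤ f k (x k) / x k := le_trans hck hfε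
      rw [le_div_iff₀ hxkpos] at this
      linarith
    -- combine: c * x k * x k ≤ x k * f k (x k) ≤ (lam - μ) * n * x k ^ 2 < (c/n) * n * x k^2 = c * x k^2
    have hlamμ : lam - μ < c / n := by linarith
    have hnpos : (0:ℝ) < n := by exact_mod_cast hn
    have h1 : c * (x k)^2 ≤ x k * f k (x k) := by nlinarith
    have h2 : x k * f k (x k) ≤ (lam - μ) * (n * (x k)^2) := by
      have hge : 0 ≤ lam - μ := le_of_lt (by linarith)
      calc x k * f k (x k) ≤ (lam - μ) * (x ⬝ᵥ x) := le_trans hterm hsum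
        _ ≤ (lam - μ) * (n * (x k)^2) := by nlinarith
    have h3 : (lam - μ) * (n * (x k)^2) < (c / n) * (n * (x k)^2) := by
      have : 0 < n * (x k)^2 := by positivity
      exact mul_lt_mul_of_pos_right hlamμ this
    have h4 : (c / n) * (n * (x k)^2) = c * (x k)^2 := by
      field_simp
    linarith
end

section
/- Let A be an n×n irreducible Stieltjes matrix with smallest eigenvalue μ. Suppose each f_i maps [0,∞) into [0,∞), is continuously differentiable on [0,∞), satisfies f_i(t)/t → 0 as t → 0⁺ and f_i(t)/t → ∞ as t → ∞, and satisfies f_i(s)/s < f_i(t)/t whenever 0 < s < t. Then for every r > 0 there exist λ > μ and x ∈ ℝⁿ with all components x_i > 0 such that A x + F(x) = λ x and the Euclidean norm ‖x‖ = r; moreover the pair (λ, x) with these properties is unique. -/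
open Set Filter



noncomputable def dotC (n : ℕ) (w : Fin n → ℝ) : (Fin n → ℝ) →L[ℝ] ℝ :=
  ∑ i, w i • (ContinuousLinearMap.proj i : (Fin n → ℝ) →L[ℝ] ℝ)

lemma dotC_apply (n : ℕ) (w v : Fin n → ℝ) : dotC n w v = ∑ i, w i * v i := by
  simp [dotC]

lemma lagrange (n : ℕ) (r : ℝ) (hr : 0 < r) (E : (Fin n → ℝ) → ℝ)
    (E' : (Fin n → ℝ) → (Fin n → ℝ))
    (hE : ∀ y, HasFDerivAt E (dotC n (E' y)) y)
    (x : Fin n → ℝ) (hx : ∑ i, x i ^ 2 = r ^ 2)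
    (hmin : ∀ y, (∑ i, y i ^ 2 = r ^ 2) → E x ≤ E y) :
    E' x = ((∑ i, E' x i * x i) / r ^ 2) • x := by
  have hr2 : (0:ℝ) < r ^ 2 := by positivity
  have key : ∀ v : Fin n → ℝ, (∑ i, v i * x i = 0) → ∑ i, E' x i * v i = 0 := by
    intro v hv
    set S := ∑ i, v i ^ 2 with hSdef
    have hS : 0 ≤ S := Finset.sum_nonneg fun i _ => sq_nonneg _
    have hpos : ∀ t : ℝ, 0 < r ^ 2 + t ^ 2 * S := by
      intro t
      have : 0 ≤ t ^ 2 * S := mul_nonneg (sq_nonneg _) hS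
      linarith
    set ρ : ℝ → ℝ := fun t => r / Real.sqrt (r ^ 2 + t ^ 2 * S) with hρdef
    set c : ℝ → (Fin n → ℝ) := fun t => ρ t • (x + t • v) with hcdef
    have hsqrtpos : ∀ t : ℝ, 0 < Real.sqrt (r ^ 2 + t ^ 2 * S) :=
      fun t => Real.sqrt_pos.mpr (hpos t)
    have hρ0 : ρ 0 = 1 := by
      simp [hρdef, Real.sqrt_sq hr.le]
      exact hr.ne'
    have hc0 : c 0 = x := by
      simp [hcdef, hρ0]
    have hsum : ∀ t, ∑ i, (c t i) ^ 2 = r ^ 2 := by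
      intro t
      have expand : ∑ i, (c t i) ^ 2 = ρ t ^ 2 * (r ^ 2 + t ^ 2 * S) := by
        simp only [hcdef, Pi.smul_apply, Pi.add_apply, Pi.smul_apply, smul_eq_mul]
        have e1 : ∀ i : Fin n, (ρ t * (x i + t * v i)) ^ 2 =
            ρ t ^ 2 * x i ^ 2 + (ρ t ^ 2 * 2 * t) * (v i * x i) + (ρ t ^ 2 * t ^ 2) * v i ^ 2 :=
          fun i => by ring
        rw [Finset.sum_congr rfl (fun i _ => e1 i), Finset.sum_add_distrib,
          Finset.sum_add_distrib, ← Finset.mul_sum, ← Finset.mul_sum, ← Finset.mul_sum, hx, hv,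
          ← hSdef]
        ring
      rw [expand, hρdef]
      rw [div_pow, Real.sq_sqrt (hpos t).le]
      field_simp
    -- derivative of c at 0 is v
    have hin : HasDerivAt (fun t : ℝ => r ^ 2 + t ^ 2 * S) 0 0 := by
      have h1 : HasDerivAt (fun t : ℝ => t ^ 2) (2 * (0:ℝ) ^ (2-1)) 0 := hasDerivAt_pow 2 0
      have h2 := (h1.mul_const S).const_add (r ^ 2)
      refine h2.congr_deriv ?_
      norm_num
    have hsq : HasDerivAt (fun t : ℝ => Real.sqrt (r ^ 2 + t ^ 2 * S))
        (0 / (2 * Real.sqrt (r ^ 2 + 0 ^ 2 * S))) 0 :=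
      (Real.hasDerivAt_sqrt (hpos 0).ne').comp 0 hin |>.congr_deriv (by ring)
    have hρd : HasDerivAt ρ 0 0 := by
      have h3 := (hasDerivAt_const (0:ℝ) r).div hsq (hsqrtpos 0).ne'
      refine h3.congr_deriv ?_
      simp
    have hwd : HasDerivAt (fun t : ℝ => x + t • v) v 0 := by
      have h4 := ((hasDerivAt_id (0:ℝ)).smul_const v).const_add x
      simpa using h4
    have hcd : HasDerivAt c v 0 := by
      have h5 := hρd.smul hwd
      rw [hρ0] at h5
      exact h5.congr_deriv (by simp)
    have hφ : HasDerivAt (E ∘ c) (dotC n (E' x) v) 0 := by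
      have h6 : HasFDerivAt E (dotC n (E' (c 0))) (c 0) := by rw [hc0]; exact hE x
      have := h6.comp_hasDerivAt 0 hcd
      rwa [hc0] at this
    have hlocmin : IsLocalMin (E ∘ c) 0 := by
      apply Filter.Eventually.of_forall
      intro t
      simpa [Function.comp, hc0] using hmin (c t) (hsum t)
    have := hlocmin.hasDerivAt_eq_zero hφ
    rw [dotC_apply] at this
    exact this
  set lam := (∑ i, E' x i * x i) / r ^ 2 with hlam
  set w : Fin n → ℝ := fun i => E' x i - lam * x i with hw
  have hwx : ∑ i, w i * x i = 0 := by
    have : ∑ i, w i * x i = (∑ i, E' x i * x i) - lam * ∑ i, x i ^ 2 := by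
      rw [Finset.mul_sum, ← Finset.sum_sub_distrib]
      exact Finset.sum_congr rfl fun i _ => by simp [hw]; ring
    rw [this, hx, hlam]
    field_simp
    ring
  have h1 := key w hwx
  have h2 : ∑ i, w i ^ 2 = 0 := by
    have : ∑ i, w i ^ 2 = (∑ i, E' x i * w i) - lam * ∑ i, w i * x i := by
      rw [Finset.mul_sum, ← Finset.sum_sub_distrib]
      exact Finset.sum_congr rfl fun i _ => by simp [hw]; ring
    rw [this, h1, hwx]
    ring
  funext i
  have : w i = 0 := by
    have := (Finset.sum_eq_zero_iff_of_nonneg (fun i _ => sq_nonneg (w i))).mp h2 i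
      (Finset.mem_univ i)
    exact pow_eq_zero_iff (by norm_num) |>.mp this
  have : E' x i - lam * x i = 0 := this
  simp [Pi.smul_apply, smul_eq_mul]
  linarith


noncomputable def En (n : ℕ) (A : Matrix (Fin n) (Fin n) ℝ) (g : Fin n → ℝ → ℝ)
    (y : Fin n → ℝ) : ℝ :=
  (1/2) * ∑ i, A.mulVec y i * y i + ∑ i, ∫ t in (0:ℝ)..(y i), g i t

lemma hasFDerivAt_En (n : ℕ) (A : Matrix (Fin n) (Fin n) ℝ)
    (hsym : ∀ i j, A i j = A j i) (g : Fin n → ℝ → ℝ) (hg : ∀ i, Continuous (g i))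
    (y : Fin n → ℝ) :
    HasFDerivAt (En n A g) (dotC n (fun i => A.mulVec y i + g i (y i))) y := by
  have hmv : ∀ (z : Fin n → ℝ) i, A.mulVec z i = ∑ j, A i j * z j := by
    intro z i; simp [Matrix.mulVec, dotProduct]
  -- quadratic part
  have hq : HasFDerivAt (fun z : Fin n → ℝ => (1/2) * ∑ i, A.mulVec z i * z i)
      (dotC n (fun i => A.mulVec y i)) y := by
    have hterm : ∀ i j : Fin n, HasFDerivAt (fun z : Fin n → ℝ => A i j * (z j * z i))
        ((A i j) • ((y i • (ContinuousLinearMap.proj j : (Fin n → ℝ) →L[ℝ] ℝ))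
          + (y j • (ContinuousLinearMap.proj i : (Fin n → ℝ) →L[ℝ] ℝ)))) y := by
      intro i j
      have hj : HasFDerivAt (fun z : Fin n → ℝ => z j)
          (ContinuousLinearMap.proj j : (Fin n → ℝ) →L[ℝ] ℝ) y :=
        hasFDerivAt_apply j y
      have hi : HasFDerivAt (fun z : Fin n → ℝ => z i)
          (ContinuousLinearMap.proj i : (Fin n → ℝ) →L[ℝ] ℝ) y :=
        hasFDerivAt_apply i y
      have := (hj.mul hi).const_mul (A i j)
      refine this.congr_fderiv ?_
      module
    have hsumd : HasFDerivAt (fun z : Fin n → ℝ => ∑ i, ∑ j, A i j * (z j * z i))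
        (∑ i, ∑ j, (A i j) • ((y i • (ContinuousLinearMap.proj j : (Fin n → ℝ) →L[ℝ] ℝ))
          + (y j • (ContinuousLinearMap.proj i : (Fin n → ℝ) →L[ℝ] ℝ)))) y := by
      apply HasFDerivAt.fun_sum
      intro i _
      exact HasFDerivAt.fun_sum fun j _ => hterm i j
    have heq : (fun z : Fin n → ℝ => (1/2) * ∑ i, A.mulVec z i * z i)
        = fun z : Fin n → ℝ => (1/2) * ∑ i, ∑ j, A i j * (z j * z i) := by
      funext z
      congr 1
      refine Finset.sum_congr rfl fun i _ => ?_
      rw [hmv, Finset.sum_mul]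
      exact Finset.sum_congr rfl fun j _ => by ring
    rw [heq]
    have h7 := hsumd.const_mul (1/2 : ℝ)
    refine h7.congr_fderiv ?_
    apply ContinuousLinearMap.ext
    intro v
    have L : dotC n (fun i => A.mulVec y i) v = ∑ i, ∑ j, A i j * (y j * v i) := by
      rw [dotC_apply]
      refine Finset.sum_congr rfl fun i _ => ?_
      rw [hmv, Finset.sum_mul]
      exact Finset.sum_congr rfl fun j _ => by ring
    have swap : ∑ i, ∑ j, A i j * (y i * v j) = ∑ i, ∑ j, A i j * (y j * v i) := by
      rw [Finset.sum_comm]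
      exact Finset.sum_congr rfl fun i _ => Finset.sum_congr rfl fun j _ => by rw [hsym]
    have R : ((1/2 : ℝ) • (∑ i, ∑ j, (A i j) •
        ((y i • (ContinuousLinearMap.proj j : (Fin n → ℝ) →L[ℝ] ℝ))
          + (y j • (ContinuousLinearMap.proj i : (Fin n → ℝ) →L[ℝ] ℝ))))) v
        = (1/2 : ℝ) * ((∑ i, ∑ j, A i j * (y i * v j)) + ∑ i, ∑ j, A i j * (y j * v i)) := by
      simp only [ContinuousLinearMap.smul_apply, ContinuousLinearMap.sum_apply,
        ContinuousLinearMap.add_apply, ContinuousLinearMap.proj_apply, smul_eq_mul,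
        ← Finset.sum_add_distrib]
      exact congrArg _ (Finset.sum_congr rfl fun i _ => Finset.sum_congr rfl fun j _ => by
        ring)
    rw [L, R, swap]
    ring
  -- integral part
  have hInt : ∀ (i : Fin n) (u : ℝ),
      HasDerivAt (fun u => ∫ t in (0:ℝ)..u, g i t) (g i u) u := by
    intro i u
    exact intervalIntegral.integral_hasDerivAt_right ((hg i).intervalIntegrable _ _)
      ((hg i).stronglyMeasurable.stronglyMeasurableAtFilter) (hg i).continuousAt
  have hGsum : HasFDerivAt (fun z : Fin n → ℝ => ∑ i, ∫ t in (0:ℝ)..(z i), g i t)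
      (∑ i, (g i (y i)) • (ContinuousLinearMap.proj i : (Fin n → ℝ) →L[ℝ] ℝ)) y := by
    apply HasFDerivAt.fun_sum
    intro i _
    exact (hInt i (y i)).comp_hasFDerivAt y (hasFDerivAt_apply i y :
      HasFDerivAt (fun z : Fin n → ℝ => z i) (ContinuousLinearMap.proj i : (Fin n → ℝ) →L[ℝ] ℝ) y)
  have htot := hq.add hGsum
  refine htot.congr_fderiv ?_
  apply ContinuousLinearMap.ext
  intro v
  simp only [dotC, ContinuousLinearMap.add_apply, ContinuousLinearMap.sum_apply,
    ContinuousLinearMap.smul_apply, ContinuousLinearMap.proj_apply, smul_eq_mul,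
    ← Finset.sum_add_distrib]
  exact Finset.sum_congr rfl fun i _ => by ring


noncomputable def ext1 (f : ℝ → ℝ) : ℝ → ℝ := fun t => if 0 ≤ t then f t else -f (-t)

lemma ext1_nonneg (f : ℝ → ℝ) (t : ℝ) (ht : 0 ≤ t) : ext1 f t = f t := if_pos ht

lemma f_zero (f : ℝ → ℝ) (hc : ContinuousOn f (Ici 0))
    (hlim : Tendsto (fun t => f t / t) (nhdsWithin 0 (Ioi 0)) (nhds 0)) : f 0 = 0 := by
  have h1 : Tendsto f (nhdsWithin 0 (Ioi 0)) (nhds (f 0)) :=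
    ((hc 0 Set.self_mem_Ici).mono Ioi_subset_Ici_self).tendsto
  have h2 : Tendsto f (nhdsWithin 0 (Ioi 0)) (nhds 0) := by
    have hid : Tendsto (fun t : ℝ => t) (nhdsWithin 0 (Ioi 0)) (nhds 0) :=
      tendsto_id.mono_left nhdsWithin_le_nhds
    have := hlim.mul hid
    rw [zero_mul] at this
    apply this.congr'
    filter_upwards [self_mem_nhdsWithin] with t ht
    exact div_mul_cancel₀ _ (ne_of_gt ht)
  exact tendsto_nhds_unique h1 h2

lemma ext1_odd (f : ℝ → ℝ) (hf0 : f 0 = 0) (t : ℝ) : ext1 f (-t) = - ext1 f t := by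
  rcases lt_trichotomy t 0 with h | h | h
  · rw [ext1, ext1, if_pos (by linarith : (0:ℝ) ≤ -t), if_neg (not_le.mpr h)]
    simp only [neg_neg]
  · simp [h, ext1, hf0]
  · rw [ext1, ext1, if_neg (by simpa using h : ¬ (0:ℝ) ≤ -t), if_pos h.le]
    simp only [neg_neg]

lemma ext1_continuous (f : ℝ → ℝ) (hc : ContinuousOn f (Ici 0)) (hf0 : f 0 = 0) :
    Continuous (ext1 f) := by
  rw [continuous_iff_continuousAt]
  intro t
  rcases lt_trichotomy t 0 with h | h | h
  · have h1 : ContinuousAt (fun s : ℝ => -f (-s)) t := by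
      have : ContinuousAt f (-t) :=
        (hc (-t) (by simp only [Set.mem_Ici]; linarith)).continuousAt (Ici_mem_nhds (by linarith))
      exact (this.comp continuous_neg.continuousAt).neg
    apply h1.congr
    filter_upwards [Iio_mem_nhds h] with s hs
    exact (if_neg (not_le.mpr hs)).symm
  · subst h
    rw [ContinuousAt]
    have hb : Tendsto (fun s : ℝ => abs (f (abs s))) (nhds 0) (nhds 0) := by
      have habs : Tendsto (fun s : ℝ => |s|) (nhds (0:ℝ)) (nhdsWithin 0 (Ici 0)) := by
        apply tendsto_nhdsWithin_of_tendsto_nhds_of_eventually_within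
        · simpa using (_root_.continuous_abs.tendsto (0:ℝ))
        · exact Eventually.of_forall fun s => abs_nonneg s
      have := ((hc 0 Set.self_mem_Ici).tendsto.comp habs)
      rw [hf0] at this
      simpa using this.abs
    have hbound : ∀ s : ℝ, ‖ext1 f s‖ ≤ abs (f (abs s)) := by
      intro s
      rw [ext1]
      split_ifs with hs
      · rw [abs_of_nonneg hs]
        exact le_of_eq (Real.norm_eq_abs _)
      · rw [abs_of_nonpos (le_of_lt (not_le.mp hs)), norm_neg]
        exact le_of_eq (Real.norm_eq_abs _)
    have : ext1 f 0 = 0 := by simp [ext1, hf0]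
    rw [this]
    exact squeeze_zero_norm hbound hb
  · have h1 : ContinuousAt f t :=
      (hc t (le_of_lt h)).continuousAt (Ici_mem_nhds h)
    apply h1.congr
    filter_upwards [Ioi_mem_nhds h] with s hs
    exact (if_pos (le_of_lt hs)).symm

lemma G_even (f : ℝ → ℝ) (hf0 : f 0 = 0) (u : ℝ) :
    (∫ t in (0:ℝ)..(-u), ext1 f t) = ∫ t in (0:ℝ)..u, ext1 f t := by
  have h := intervalIntegral.integral_comp_neg (a := (0:ℝ)) (b := u) (fun t => ext1 f t)
  simp only [neg_zero] at h
  have h2 : (∫ t in (0:ℝ)..u, ext1 f (-t)) = - ∫ t in (0:ℝ)..u, ext1 f t := by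
    rw [intervalIntegral.integral_congr (g := fun t => - ext1 f t)
      (fun t _ => ext1_odd f hf0 t), intervalIntegral.integral_neg]
  have h3 : (∫ t in (-u)..(0:ℝ), ext1 f t) = - ∫ t in (0:ℝ)..(-u), ext1 f t :=
    intervalIntegral.integral_symm 0 (-u)
  rw [h2, h3] at h
  linarith


lemma comparison (n : ℕ) (hn : 1 ≤ n) (A : Matrix (Fin n) (Fin n) ℝ)
    (hA_offdiag : ∀ i j : Fin n, i ≠ j → A i j ≤ 0)
    (f : Fin n → ℝ → ℝ)
    (hf_mono : ∀ (i : Fin n) (s t : ℝ), 0 < s → s < t → f i s / s < f i t / t)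
    (lam lam' : ℝ) (x y : Fin n → ℝ)
    (hx : ∀ i, 0 < x i) (hy : ∀ i, 0 < y i)
    (hex : ∀ i, A.mulVec x i + f i (x i) = lam * x i)
    (hey : ∀ i, A.mulVec y i + f i (y i) = lam' * y i)
    (hll : lam ≤ lam') :
    (∀ i, x i ≤ y i) ∧ (lam < lam' → ∀ i, x i < y i) := by
  have hnemp : (Finset.univ : Finset (Fin n)).Nonempty := by
    have : Nonempty (Fin n) := Fin.pos_iff_nonempty.mp hn
    exact Finset.univ_nonempty
  obtain ⟨k, -, hkmax⟩ := Finset.exists_max_image Finset.univ (fun i => x i / y i) hnemp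
  set t := x k / y k with htdef
  have htpos : 0 < t := div_pos (hx k) (hy k)
  have hxk : x k = t * y k := by
    rw [htdef, div_mul_cancel₀ _ (hy k).ne']
  have hle : ∀ i, x i ≤ t * y i := by
    intro i
    have h1 := hkmax i (Finset.mem_univ i)
    rw [div_le_iff₀ (hy i)] at h1
    linarith [h1]
  have hAx : t * A.mulVec y k ≤ A.mulVec x k := by
    have hdiff : A.mulVec x k - t * A.mulVec y k = ∑ j, A k j * (x j - t * y j) := by
      simp only [Matrix.mulVec, dotProduct, Finset.mul_sum, ← Finset.sum_sub_distrib]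
      exact Finset.sum_congr rfl fun j _ => by ring
    have hnn : 0 ≤ ∑ j, A k j * (x j - t * y j) := by
      apply Finset.sum_nonneg
      intro j _
      rcases eq_or_ne j k with rfl | hjk
      · rw [← hxk]
        simp
      · have := mul_nonneg (neg_nonneg.mpr (hA_offdiag k j (Ne.symm hjk)))
          (neg_nonneg.mpr (sub_nonpos.mpr (hle j)))
        nlinarith [this]
    linarith [hdiff ▸ hnn]
  have hfy : f k (y k) = lam' * y k - A.mulVec y k := by linarith [hey k]
  have hmain : f k (x k) ≤ t * f k (y k) := by
    have h1 : f k (x k) = lam * x k - A.mulVec x k := by linarith [hex k]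
    have h2 : lam * x k = lam * t * y k := by rw [hxk]; ring
    have h3 : lam * t * y k ≤ lam' * t * y k := by
      have := mul_le_mul_of_nonneg_right hll (mul_pos htpos (hy k)).le
      nlinarith [this]
    rw [hfy]
    nlinarith [hAx]
  have hmainlt : lam < lam' → f k (x k) < t * f k (y k) := by
    intro hlt
    have h1 : f k (x k) = lam * x k - A.mulVec x k := by linarith [hex k]
    have h3 : lam * t * y k < lam' * t * y k := by
      have := mul_lt_mul_of_pos_right hlt (mul_pos htpos (hy k))
      nlinarith [this]
    rw [hfy]
    have h2 : lam * x k = lam * t * y k := by rw [hxk]; ring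
    nlinarith [hAx]
  have ht1 : t ≤ 1 := by
    by_contra h1
    push_neg at h1
    have hyk : y k < t * y k := by nlinarith [hy k]
    have := hf_mono k (y k) (t * y k) (hy k) hyk
    rw [div_lt_div_iff₀ (hy k) (mul_pos htpos (hy k))] at this
    have : t * f k (y k) < f k (t * y k) := by nlinarith [hy k]
    rw [← hxk] at this
    linarith [hmain]
  refine ⟨fun i => le_trans (hle i) (by nlinarith [hy i, ht1]), fun hlt i => ?_⟩
  have htlt : t < 1 := by
    rcases lt_or_eq_of_le ht1 with h | h
    · exact h
    · exfalso
      have := hmainlt hlt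
      rw [h, one_mul] at this
      rw [hxk, h, one_mul] at this
      linarith
  calc x i ≤ t * y i := hle i
    _ < y i := by nlinarith [hy i]


section Aux

lemma fpos_of_mono (f : ℝ → ℝ)
    (hlim : Tendsto (fun t => f t / t) (nhdsWithin 0 (Ioi 0)) (nhds 0))
    (hmono : ∀ s t : ℝ, 0 < s → s < t → f s / s < f t / t) :
    ∀ t : ℝ, 0 < t → 0 < f t := by
  have h0 : ∀ t : ℝ, 0 < t → 0 ≤ f t / t := by
    intro t ht
    have hev : ∀ᶠ s in nhdsWithin 0 (Ioi 0), f s / s ≤ f t / t := by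
      filter_upwards [Ioo_mem_nhdsGT_of_mem (by constructor <;> [exact le_refl 0; exact ht])]
        with s hs
      exact (hmono s t hs.1 hs.2).le
    exact le_of_tendsto hlim hev
  intro t ht
  have h1 : f (t/2) / (t/2) < f t / t := hmono (t/2) t (by linarith) (by linarith)
  have h2 : 0 ≤ f (t/2) / (t/2) := h0 (t/2) (by linarith)
  have h3 : 0 < f t / t := lt_of_le_of_lt h2 h1
  have := mul_pos h3 ht
  rwa [div_mul_cancel₀ _ ht.ne'] at this

lemma sum_sq_compact (n : ℕ) (r : ℝ) (hr : 0 < r) :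
    IsCompact {y : Fin n → ℝ | ∑ i, y i ^ 2 = r ^ 2} := by
  apply (isCompact_closedBall (0 : Fin n → ℝ) r).of_isClosed_subset
  · exact isClosed_eq (continuous_finset_sum _ fun i _ => (continuous_apply i).pow 2)
      continuous_const
  · intro y hy
    simp only [Set.mem_setOf_eq] at hy
    simp only [Metric.mem_closedBall, dist_zero_right]
    rw [pi_norm_le_iff_of_nonneg hr.le]
    intro i
    have h1 : y i ^ 2 ≤ r ^ 2 := by
      rw [← hy]
      exact Finset.single_le_sum (f := fun j => y j ^ 2) (fun j _ => sq_nonneg _)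
        (Finset.mem_univ i)
    have := Real.sqrt_le_sqrt h1
    rwa [Real.sqrt_sq_eq_abs, Real.sqrt_sq hr.le, Real.norm_eq_abs] at *

end Aux

/-- For every r > 0 there is a unique pair (λ, x) with λ > μ,
x positive, A x + F(x) = λ x and Euclidean norm of x equal to r. -/
theorem stmt_5 (n : ℕ) (hn : 1 ≤ n) (A : Matrix (Fin n) (Fin n) ℝ)
    (hA_irred : ∀ S : Set (Fin n), S.Nonempty → S ≠ Set.univ →
      ∃ i ∈ S, ∃ j, j ∉ S ∧ A i j ≠ 0)
    (hA_posdef : A.PosDef)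
    (hA_offdiag : ∀ i j : Fin n, i ≠ j → A i j ≤ 0)
    (μ : ℝ)
    (hμ_eig : ∃ x : Fin n → ℝ, x ≠ 0 ∧ A.mulVec x = μ • x)
    (hμ_min : ∀ (μ' : ℝ) (x : Fin n → ℝ), x ≠ 0 → A.mulVec x = μ' • x → μ ≤ μ')
    (f : Fin n → ℝ → ℝ)
    (hf_map : ∀ i t, 0 ≤ t → 0 ≤ f i t)
    (hf_smooth : ∀ i, ContDiffOn ℝ 1 (f i) (Set.Ici 0))
    (hf_lim0 : ∀ i, Filter.Tendsto (fun t => f i t / t) (nhdsWithin 0 (Set.Ioi 0)) (nhds 0))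
    (hf_liminf : ∀ i, Filter.Tendsto (fun t => f i t / t) Filter.atTop Filter.atTop)
    (hf_mono : ∀ (i : Fin n) (s t : ℝ), 0 < s → s < t → f i s / s < f i t / t)
    (r : ℝ) (hr : 0 < r) :
    ∃! p : ℝ × (Fin n → ℝ), μ < p.1 ∧ (∀ i, 0 < p.2 i) ∧
      A.mulVec p.2 + (fun i => f i (p.2 i)) = p.1 • p.2 ∧
      Real.sqrt (∑ i, p.2 i ^ 2) = r := by
  have hNE : Nonempty (Fin n) := Fin.pos_iff_nonempty.mp hn
  have huniv : (Finset.univ : Finset (Fin n)).Nonempty := Finset.univ_nonempty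
  have hr2 : (0:ℝ) < r ^ 2 := by positivity
  have hsym : ∀ i j, A i j = A j i := by
    intro i j
    have h1 := hA_posdef.isHermitian
    have h2 := congrFun (congrFun h1 j) i
    simpa [Matrix.conjTranspose_apply] using h2
  have hf0 : ∀ i, f i 0 = 0 := fun i =>
    f_zero (f i) (hf_smooth i).continuousOn (hf_lim0 i)
  set g : Fin n → ℝ → ℝ := fun i => ext1 (f i) with hgdef
  have hgc : ∀ i, Continuous (g i) := fun i =>
    ext1_continuous (f i) (hf_smooth i).continuousOn (hf0 i)
  have hfpos : ∀ (i : Fin n) (t : ℝ), 0 < t → 0 < f i t := fun i =>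
    fpos_of_mono (f i) (hf_lim0 i) (fun s t => hf_mono i s t)
  obtain ⟨lam, x, hlamgt, hxpos, heqf, hxK⟩ :
      ∃ lam : ℝ, ∃ x : Fin n → ℝ, μ < lam ∧ (∀ i, 0 < x i) ∧
        (∀ i, A.mulVec x i + f i (x i) = lam * x i) ∧ ∑ i, x i ^ 2 = r ^ 2 := by
    have hED : ∀ y, HasFDerivAt (En n A g) (dotC n (fun i => A.mulVec y i + g i (y i))) y :=
      fun y => hasFDerivAt_En n A hsym g hgc y
    have hEcont : Continuous (En n A g) :=
      continuous_iff_continuousAt.mpr fun y => (hED y).differentiableAt.continuousAt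
    have hKc := sum_sq_compact n r hr
    have hKne : {y : Fin n → ℝ | ∑ i, y i ^ 2 = r ^ 2}.Nonempty := by
      refine ⟨Pi.single ⟨0, hn⟩ r, ?_⟩
      simp only [Set.mem_setOf_eq]
      rw [Finset.sum_eq_single (⟨0, hn⟩ : Fin n)]
      · simp
      · intro j _ hj
        rw [Pi.single_eq_of_ne hj]
        ring
      · intro h
        exact absurd (Finset.mem_univ _) h
    obtain ⟨x₀, hx₀K, hx₀min⟩ := hKc.exists_isMinOn hKne hEcont.continuousOn
    set x : Fin n → ℝ := fun i => |x₀ i| with hxdef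
    have hxnn : ∀ i, 0 ≤ x i := fun i => abs_nonneg _
    have hxK : ∑ i, x i ^ 2 = r ^ 2 := by
      simpa [hxdef, sq_abs] using hx₀K
    have hGabs : ∀ i, (∫ t in (0:ℝ)..(x i), g i t) = ∫ t in (0:ℝ)..(x₀ i), g i t := by
      intro i
      rcases le_or_gt 0 (x₀ i) with h | h
      · simp [hxdef, abs_of_nonneg h]
      · simp only [hxdef, abs_of_neg h]
        exact G_even (f i) (hf0 i) (x₀ i)
    have hmv : ∀ (z : Fin n → ℝ) i, A.mulVec z i = ∑ j, A i j * z j := by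
      intro z i
      simp [Matrix.mulVec, dotProduct]
    have hQabs : ∑ i, A.mulVec x i * x i ≤ ∑ i, A.mulVec x₀ i * x₀ i := by
      have expand : ∀ z : Fin n → ℝ,
          ∑ i, A.mulVec z i * z i = ∑ i, ∑ j, A i j * z j * z i := by
        intro z
        refine Finset.sum_congr rfl fun i _ => ?_
        rw [hmv, Finset.sum_mul]
      rw [expand, expand]
      refine Finset.sum_le_sum fun i _ => Finset.sum_le_sum fun j _ => ?_
      rcases eq_or_ne i j with rfl | hij
      · simp only [hxdef]
        rw [mul_assoc, mul_assoc, abs_mul_abs_self]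
      · have h1 : x₀ j * x₀ i ≤ x j * x i := by
          simp only [hxdef]
          rw [← abs_mul]
          exact le_abs_self _
        have h2 := mul_le_mul_of_nonpos_left h1 (hA_offdiag i j hij)
        calc A i j * x j * x i = A i j * (x j * x i) := by ring
          _ ≤ A i j * (x₀ j * x₀ i) := h2
          _ = A i j * x₀ j * x₀ i := by ring
    have hxmin : ∀ y, (∑ i, y i ^ 2 = r ^ 2) → En n A g x ≤ En n A g y := by
      intro y hy
      have h1 : En n A g x ≤ En n A g x₀ := by
        rw [En, En]
        have h2 : ∑ i, ∫ t in (0:ℝ)..(x i), g i t = ∑ i, ∫ t in (0:ℝ)..(x₀ i), g i t :=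
          Finset.sum_congr rfl fun i _ => hGabs i
        rw [h2]
        linarith [hQabs]
      exact h1.trans (hx₀min hy)
    have hlag := lagrange n r hr (En n A g) (fun y i => A.mulVec y i + g i (y i)) hED x hxK hxmin
    set lam := (∑ i, (A.mulVec x i + g i (x i)) * x i) / r ^ 2 with hlamdef
    have heqg : ∀ i, A.mulVec x i + g i (x i) = lam * x i := by
      intro i
      have := congrFun hlag i
      simpa [hlamdef] using this
    have hgx : ∀ i, g i (x i) = f i (x i) := fun i => ext1_nonneg (f i) (x i) (hxnn i)
    have heqf : ∀ i, A.mulVec x i + f i (x i) = lam * x i := fun i => by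
      rw [← hgx i]
      exact heqg i
    -- positivity of x
    have hxpos : ∀ i, 0 < x i := by
      by_contra hcon
      push_neg at hcon
      obtain ⟨j0, hj0⟩ := hcon
      set S : Set (Fin n) := {i | 0 < x i} with hSdef
      have hSne : S.Nonempty := by
        by_contra hSe
        have hall : ∀ i, x i = 0 := by
          intro i
          have h9 : ¬ (0 < x i) := fun h => hSe ⟨i, h⟩
          exact le_antisymm (not_lt.mp h9) (hxnn i)
        rw [Finset.sum_eq_zero (fun i _ => by rw [hall i]; ring)] at hxK
        exact absurd hxK.symm (ne_of_gt hr2)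
      have hSnu : S ≠ Set.univ := by
        intro h
        have : j0 ∈ S := h ▸ Set.mem_univ j0
        exact absurd this (by simpa [hSdef] using hj0)
      obtain ⟨i, hiS, j, hjS, hAij⟩ := hA_irred S hSne hSnu
      have hxj : x j = 0 := le_antisymm (not_lt.mp (by simpa [hSdef] using hjS)) (hxnn j)
      have h5 : A.mulVec x j = 0 := by
        have := heqf j
        rw [hxj, hf0 j] at this
        simpa using this
      have h6 : ∑ k, A j k * x k = 0 := by
        rw [← hmv x j]
        exact h5
      have h7 : ∀ k ∈ Finset.univ, A j k * x k ≤ 0 := by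
        intro k _
        rcases eq_or_ne k j with rfl | hkj
        · simp [hxj]
        · have := mul_nonneg (neg_nonneg.mpr (hA_offdiag j k hkj.symm)) (hxnn k)
          nlinarith [this]
      have h8 := (Finset.sum_eq_zero_iff_of_nonpos h7).mp h6 i (Finset.mem_univ i)
      have hxi : 0 < x i := by simpa [hSdef] using hiS
      have hAji : A j i = 0 := by
        rcases mul_eq_zero.mp h8 with h | h
        · exact h
        · exact absurd h hxi.ne'
      exact hAij (by rw [hsym i j]; exact hAji)
    -- Rayleigh bound
    have hray : μ * r ^ 2 ≤ ∑ i, A.mulVec x i * x i := by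
      have hE0D : ∀ y, HasFDerivAt (En n A (fun _ _ => (0:ℝ)))
          (dotC n (fun i => A.mulVec y i + 0)) y :=
        fun y => hasFDerivAt_En n A hsym _ (fun i => continuous_const) y
      have hE0cont : Continuous (En n A (fun _ _ => (0:ℝ))) :=
        continuous_iff_continuousAt.mpr fun y => (hE0D y).differentiableAt.continuousAt
      obtain ⟨z, hzK, hzmin⟩ := hKc.exists_isMinOn hKne hE0cont.continuousOn
      have hzsum : ∑ i, z i ^ 2 = r ^ 2 := hzK
      have hlag0 := lagrange n r hr (En n A (fun _ _ => (0:ℝ)))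
        (fun y i => A.mulVec y i + 0) hE0D z hzsum (fun y hy => hzmin hy)
      set lam0 := (∑ i, (A.mulVec z i + 0) * z i) / r ^ 2 with hlam0def
      have hzeig : A.mulVec z = lam0 • z := by
        funext i
        have := congrFun hlag0 i
        simpa [hlam0def] using this
      have hzne : z ≠ 0 := by
        intro h
        rw [h] at hzsum
        simp at hzsum
        exact absurd hzsum.symm (ne_of_gt hr2)
      have hmu0 : μ ≤ lam0 := hμ_min lam0 z hzne hzeig
      have hqz : ∑ i, A.mulVec z i * z i = lam0 * r ^ 2 := by
        have h9 : ∑ i, A.mulVec z i * z i = ∑ i, lam0 * z i ^ 2 := by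
          refine Finset.sum_congr rfl fun i _ => ?_
          rw [show A.mulVec z i = lam0 * z i from by rw [hzeig]; simp]
          ring
        rw [h9, ← Finset.mul_sum, hzsum]
      have hE0val : ∀ y : Fin n → ℝ,
          En n A (fun _ _ => (0:ℝ)) y = (1/2) * ∑ i, A.mulVec y i * y i := by
        intro y
        rw [En]
        simp
      have h10 := hzmin (show x ∈ {y : Fin n → ℝ | ∑ i, y i ^ 2 = r ^ 2} from hxK)
      simp only [Set.mem_setOf_eq, hE0val] at h10
      nlinarith [h10, hqz, hmu0, hr2]
    -- lam > μ
    have hP : 0 < ∑ i, f i (x i) * x i :=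
      Finset.sum_pos (fun i _ => mul_pos (hfpos i _ (hxpos i)) (hxpos i)) huniv
    have hlamval : lam * r ^ 2 = ∑ i, A.mulVec x i * x i + ∑ i, f i (x i) * x i := by
      rw [hlamdef, div_mul_cancel₀ _ (ne_of_gt hr2), ← Finset.sum_add_distrib]
      refine Finset.sum_congr rfl fun i _ => ?_
      rw [hgx i]
      ring
    have hlamgt : μ < lam := by
      have h11 : μ * r ^ 2 < lam * r ^ 2 := by linarith
      exact lt_of_mul_lt_mul_right (by linarith) hr2.le
    exact ⟨lam, x, hlamgt, hxpos, heqf, hxK⟩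
  refine ⟨(lam, x), ⟨hlamgt, hxpos, ?_, ?_⟩, ?_⟩
  · funext i
    simp only [Pi.add_apply, Pi.smul_apply, smul_eq_mul]
    exact heqf i
  · rw [hxK, Real.sqrt_sq hr.le]
  · rintro ⟨l', y⟩ ⟨h1, h2, h3, h4⟩
    have h3' : ∀ i, A.mulVec y i + f i (y i) = l' * y i := fun i => by
      have := congrFun h3 i
      simpa using this
    have hsumy : ∑ i, y i ^ 2 = r ^ 2 := by
      have h0 : 0 ≤ ∑ i, y i ^ 2 := Finset.sum_nonneg fun i _ => sq_nonneg _
      have h5 := congrArg (fun z : ℝ => z ^ 2) h4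
      simpa [Real.sq_sqrt h0] using h5
    have hkey : ∀ (a b : ℝ) (u v : Fin n → ℝ), (∀ i, 0 < u i) → (∀ i, 0 < v i) →
        (∀ i, A.mulVec u i + f i (u i) = a * u i) →
        (∀ i, A.mulVec v i + f i (v i) = b * v i) →
        (∑ i, u i ^ 2 = r ^ 2) → (∑ i, v i ^ 2 = r ^ 2) → ¬ a < b := by
      intro a b u v hu hv hea heb hsu hsv hlt
      have hc := (comparison n hn A hA_offdiag f hf_mono a b u v hu hv hea heb hlt.le).2 hlt
      have hstrict : ∑ i, u i ^ 2 < ∑ i, v i ^ 2 :=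
        Finset.sum_lt_sum_of_nonempty huniv fun i _ =>
          pow_lt_pow_left₀ (hc i) (hu i).le two_ne_zero
      rw [hsu, hsv] at hstrict
      exact lt_irrefl _ hstrict
    have heqlam : l' = lam := by
      rcases lt_trichotomy l' lam with h | h | h
      · exact absurd h (hkey l' lam y x h2 hxpos h3' heqf hsumy hxK)
      · exact h
      · exact absurd h (hkey lam l' x y hxpos h2 heqf h3' hxK hsumy)
    have heqx : y = x := by
      have c1 := (comparison n hn A hA_offdiag f hf_mono l' lam y x h2 hxpos h3' heqf
        heqlam.le).1
      have c2 := (comparison n hn A hA_offdiag f hf_mono lam l' x y hxpos h2 heqf h3'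
        heqlam.ge).1
      funext i
      exact le_antisymm (c1 i) (c2 i)
    rw [Prod.ext_iff]
    exact ⟨heqlam, heqx⟩
end

section
/- Let β > 0. Then there exist λ ∈ ℝ and φ ∈ ℝⁿ with φ_i > 0 for all i such that D φ + β φ³ = λ φ and h · φᵀφ = 1; moreover the pair (λ, φ) with these properties is unique. -/
open Finset

lemma chain_aux {n : ℕ} (P : Fin n → Prop) :
    ∀ d : ℕ, ∀ a b : Fin n, ((a : ℤ) - (b : ℤ)).natAbs = d → P a → ¬ P b →
    ∃ i j : Fin n, |(i : ℤ) - (j : ℤ)| = 1 ∧ P i ∧ ¬ P j := by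
  intro d
  induction d using Nat.strong_induction_on with
  | _ d ih =>
    intro a b hd ha hb
    rcases Nat.lt_or_ge d 2 with hlt | hge
    · interval_cases d
      · have : a = b := by
          have : (a : ℤ) = (b : ℤ) := by omega
          exact Fin.ext (by exact_mod_cast this)
        exact absurd (this ▸ ha) hb
      · exact ⟨a, b, by rw [Int.abs_eq_natAbs]; omega, ha, hb⟩
    · rcases lt_or_gt_of_ne (fun hab : (a:ℤ) = (b:ℤ) => by omega) with hab | hab
      · have hc : (a : ℕ) + 1 < n := by
          have := b.isLt
          have : ((a:ℤ)) < (b:ℤ) := hab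
          omega
        refine ?_
        have hcv : ((⟨(a:ℕ)+1, hc⟩ : Fin n) : ℕ) = (a:ℕ)+1 := rfl
        set c : Fin n := ⟨(a : ℕ) + 1, hc⟩ with hcdef
        by_cases hPc : P c
        · exact ih (d-1) (by omega) c b (by omega) hPc hb
        · exact ⟨a, c, by rw [Int.abs_eq_natAbs]; omega, ha, hPc⟩
      · have hge1 : 1 ≤ (a:ℕ) := by
          have : ((b:ℤ)) < (a:ℤ) := hab
          omega
        have hc : (a : ℕ) - 1 < n := by have := a.isLt; omega
        have hcv : ((⟨(a:ℕ)-1, hc⟩ : Fin n) : ℕ) = (a:ℕ)-1 := rfl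
        set c : Fin n := ⟨(a : ℕ) - 1, hc⟩ with hcdef
        by_cases hPc : P c
        · exact ih (d-1) (by omega) c b (by omega) hPc hb
        · exact ⟨a, c, by rw [Int.abs_eq_natAbs]; omega, ha, hPc⟩

lemma mulVec_sum {n : ℕ} (D : Matrix (Fin n) (Fin n) ℝ) (x : Fin n → ℝ) (i : Fin n) :
    D.mulVec x i = ∑ l, D i l * x l := rfl

noncomputable def GPE {n : ℕ} (D : Matrix (Fin n) (Fin n) ℝ) (β : ℝ) (x : Fin n → ℝ) : ℝ :=
  (∑ i, x i * D.mulVec x i) + β / 2 * ∑ i, x i ^ 4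

lemma GPE_smul {n : ℕ} (D : Matrix (Fin n) (Fin n) ℝ) (β c : ℝ) (x : Fin n → ℝ) :
    GPE D β (fun i => c * x i) = c^2 * (∑ i, x i * D.mulVec x i) + c^4 * (β / 2 * ∑ i, x i ^ 4) := by
  unfold GPE
  congr 1
  · rw [Finset.mul_sum]
    refine Finset.sum_congr rfl fun i _ => ?_
    rw [mulVec_sum, mulVec_sum, Finset.mul_sum, Finset.mul_sum, Finset.mul_sum]
    refine Finset.sum_congr rfl fun l _ => by ring
  · have h4 : ∑ i, (c * x i)^4 = c^4 * ∑ i, x i^4 := by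
      rw [Finset.mul_sum]; exact Finset.sum_congr rfl fun i _ => by ring
    simp only []
    rw [h4]; ring

lemma GPE_stationary {n : ℕ} (h : ℝ) (hh : 0 < h) (D : Matrix (Fin n) (Fin n) ℝ)
    (hsymm : ∀ i j, D i j = D j i) (β : ℝ) (φ : Fin n → ℝ)
    (hφS : h * ∑ i, φ i ^ 2 = 1)
    (hmin : ∀ x : Fin n → ℝ, h * ∑ i, x i ^ 2 = 1 → GPE D β φ ≤ GPE D β x)
    (j : Fin n) :
    D.mulVec φ j + β * φ j ^ 3
      = (h * (∑ i, φ i * D.mulVec φ i) + h * β * ∑ i, φ i ^ 4) * φ j := by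
  classical
  set a : ℝ := ∑ i, φ i * D.mulVec φ i with ha
  set b : ℝ := ∑ i, φ i ^ 4 with hb
  set dj : ℝ := D.mulVec φ j with hdj
  set pj : ℝ := φ j with hpj
  set δ : Fin n → ℝ := fun i => if i = j then 1 else 0 with hδ
  -- expansions
  have hsum2 : ∀ t : ℝ, ∑ i, (φ i + t * δ i)^2 = (∑ i, φ i^2) + (2*t*pj + t^2) := by
    intro t
    have point : ∀ i, (φ i + t*δ i)^2 = φ i^2 + (if i = j then 2*t*φ i + t^2 else 0) := by
      intro i; by_cases hij : i = j <;> simp [hδ, hij] <;> ring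
    rw [Finset.sum_congr rfl fun i _ => point i, Finset.sum_add_distrib,
      Finset.sum_ite_eq' univ j (fun i => 2*t*φ i + t^2)]
    simp [hpj]
  have hQexp : ∀ t : ℝ, ∑ i, (φ i + t*δ i) * (D.mulVec (fun l => φ l + t*δ l) i)
      = a + 2*dj*t + D j j * t^2 := by
    intro t
    have inner : ∀ i, D.mulVec (fun l => φ l + t*δ l) i = D.mulVec φ i + t * D i j := by
      intro i
      rw [mulVec_sum, mulVec_sum]
      have point : ∀ l, D i l * (φ l + t*δ l) = D i l * φ l + (if l = j then t * D i l else 0) := by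
        intro l; by_cases hlj : l = j <;> simp [hδ, hlj] <;> ring
      rw [Finset.sum_congr rfl fun l _ => point l, Finset.sum_add_distrib,
        Finset.sum_ite_eq' univ j (fun l => t * D i l)]
      simp [mul_comm]
    rw [Finset.sum_congr rfl fun i _ => by rw [inner i]]
    have point : ∀ i, (φ i + t*δ i) * (D.mulVec φ i + t * D i j)
        = φ i * D.mulVec φ i + t * (φ i * D i j)
          + (if i = j then t * (D.mulVec φ i + t * D i j) else 0) := by
      intro i; by_cases hij : i = j <;> simp [hδ, hij] <;> ring
    rw [Finset.sum_congr rfl fun i _ => point i, Finset.sum_add_distrib, Finset.sum_add_distrib,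
      Finset.sum_ite_eq' univ j (fun i => t * (D.mulVec φ i + t * D i j))]
    have hswap : ∑ i, t * (φ i * D i j) = t * dj := by
      rw [hdj, mulVec_sum, Finset.mul_sum]
      exact Finset.sum_congr rfl fun i _ => by rw [hsymm i j]; ring
    rw [hswap]
    simp only [mem_univ, if_true, ← ha, ← hdj]
    ring
  have hFexp : ∀ t : ℝ, ∑ i, (φ i + t*δ i)^4 = b + ((pj + t)^4 - pj^4) := by
    intro t
    have point : ∀ i, (φ i + t*δ i)^4 = φ i^4 + (if i = j then (φ j + t)^4 - φ j^4 else 0) := by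
      intro i; by_cases hij : i = j <;> simp [hδ, hij] <;> ring
    rw [Finset.sum_congr rfl fun i _ => point i, Finset.sum_add_distrib,
      Finset.sum_ite_eq' univ j (fun i => (φ j + t)^4 - φ j^4)]
    simp [hb, hpj]
  -- the one-dimensional function
  set N : ℝ → ℝ := fun t => 1 + 2*h*pj*t + h*t^2 with hN
  set g : ℝ → ℝ := fun t => (a + 2*dj*t + D j j * t^2) / N t
      + β/2 * ((b + ((pj+t)^4 - pj^4)) / (N t)^2) with hg
  have hN0 : N 0 = 1 := by simp [hN]
  have hg0 : g 0 = GPE D β φ := by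
    simp [hg, hN0, GPE, ← ha, ← hb]
  have hNc : Continuous N := by fun_prop
  have hevN : ∀ᶠ t in nhds (0:ℝ), 0 < N t := by
    exact ContinuousAt.eventually_lt (f := fun _ : ℝ => (0:ℝ)) continuousAt_const
      hNc.continuousAt (by rw [hN0]; norm_num)
  have hge : ∀ t : ℝ, 0 < N t → g 0 ≤ g t := by
    intro t hNt
    set c : ℝ := (Real.sqrt (N t))⁻¹ with hc
    have hc2 : c^2 = (N t)⁻¹ := by
      rw [hc, inv_pow, Real.sq_sqrt (le_of_lt hNt)]
    have hc4 : c^4 = ((N t)^2)⁻¹ := by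
      have h44 : c^4 = (c^2)^2 := by ring
      rw [h44, hc2, inv_pow]
    set y : Fin n → ℝ := fun i => φ i + t * δ i with hy
    have hyN : h * ∑ i, y i ^2 = N t := by
      rw [hy]
      simp only []
      rw [hsum2 t, hN]
      simp only []
      rw [mul_add, hφS]
      ring
    have hxS : h * ∑ i, (c * y i)^2 = 1 := by
      have : ∑ i, (c * y i)^2 = c^2 * ∑ i, y i ^2 := by
        rw [Finset.mul_sum]; exact Finset.sum_congr rfl fun i _ => by ring
      rw [this, hc2]
      calc h * ((N t)⁻¹ * ∑ i, y i ^2) = (N t)⁻¹ * (h * ∑ i, y i ^2) := by ring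
      _ = (N t)⁻¹ * N t := by rw [hyN]
      _ = 1 := inv_mul_cancel₀ (ne_of_gt hNt)
    have hval : GPE D β (fun i => c * y i) = g t := by
      rw [GPE_smul, hc2, hc4]
      have hQy : ∑ i, y i * D.mulVec y i = a + 2*dj*t + D j j * t^2 := hQexp t
      have hFy : ∑ i, y i ^ 4 = b + ((pj+t)^4 - pj^4) := hFexp t
      rw [hQy, hFy, hg]
      simp only []
      rw [div_eq_inv_mul, div_eq_inv_mul]
      ring
    calc g 0 = GPE D β φ := hg0
    _ ≤ GPE D β (fun i => c * y i) := hmin _ hxS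
    _ = g t := hval
  have hloc : IsLocalMin g 0 := hevN.mono hge
  -- derivative of g at 0
  have hQ' : HasDerivAt (fun t : ℝ => a + 2*dj*t + D j j * t^2) (2*dj) 0 := by
    have h1 := (((hasDerivAt_id (0:ℝ)).const_mul (2*dj)).const_add a).add
      ((hasDerivAt_pow 2 (0:ℝ)).const_mul (D j j))
    convert h1 using 1 <;> norm_num <;> rfl
  have hN' : HasDerivAt N (2*h*pj) 0 := by
    have h1 := (((hasDerivAt_id (0:ℝ)).const_mul (2*h*pj)).const_add 1).add
      ((hasDerivAt_pow 2 (0:ℝ)).const_mul h)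
    convert h1 using 1 <;> norm_num <;> rfl
  have hF' : HasDerivAt (fun t : ℝ => b + ((pj+t)^4 - pj^4)) (4*pj^3) 0 := by
    have h1 := (((((hasDerivAt_id (0:ℝ)).const_add pj).pow 4).sub_const (pj^4)).const_add b)
    convert h1 using 1 <;> norm_num <;> rfl
  have hN0ne : N 0 ≠ 0 := by rw [hN0]; norm_num
  have hN20ne : N 0 ^ 2 ≠ 0 := by rw [hN0]; norm_num
  have hgd := (hQ'.div hN' hN0ne).add ((hF'.div (hN'.pow 2) hN20ne).const_mul (β/2))
  have hzero := hloc.hasDerivAt_eq_zero hgd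
  rw [hN0] at hzero
  norm_num at hzero
  rw [hN0] at hzero
  norm_num at hzero
  linarith [hzero]

lemma amgm_aux (a b c d : ℝ) (ha : 0 < a) (hb : 0 < b) (hc : 0 < c) (hd : 0 < d) :
    2*(a*b) + 2*(c*d) ≤ (b*c^2/a + a*d^2/b) + (d*a^2/c + c*b^2/d) := by
  have h1 : b*c^2/a + a*d^2/b - 2*(c*d) = (b*c - a*d)^2/(a*b) := by
    field_simp; ring
  have h2 : d*a^2/c + c*b^2/d - 2*(a*b) = (d*a - c*b)^2/(c*d) := by
    field_simp; ring
  nlinarith [div_nonneg (sq_nonneg (b*c - a*d)) (le_of_lt (mul_pos ha hb)),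
    div_nonneg (sq_nonneg (d*a - c*b)) (le_of_lt (mul_pos hc hd))]

lemma picone {n : ℕ} (D : Matrix (Fin n) (Fin n) ℝ)
    (hsymm : ∀ i j, D i j = D j i) (hoff : ∀ i j, i ≠ j → D i j ≤ 0)
    (φ ψ : Fin n → ℝ) (hφ : ∀ i, 0 < φ i) (hψ : ∀ i, 0 < ψ i) :
    0 ≤ (∑ i, D.mulVec φ i * (φ i - ψ i^2 / φ i))
        + ∑ i, D.mulVec ψ i * (ψ i - φ i^2 / ψ i) := by
  classical
  set T : Fin n → Fin n → ℝ := fun i l =>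
    D i l * (φ l * (φ i - ψ i^2 / φ i) + ψ l * (ψ i - φ i^2 / ψ i)) with hT
  have hK : (∑ i, D.mulVec φ i * (φ i - ψ i^2 / φ i))
      + ∑ i, D.mulVec ψ i * (ψ i - φ i^2 / ψ i) = ∑ i, ∑ l, T i l := by
    rw [← Finset.sum_add_distrib]
    refine Finset.sum_congr rfl fun i _ => ?_
    rw [mulVec_sum, mulVec_sum, Finset.sum_mul, Finset.sum_mul, ← Finset.sum_add_distrib]
    refine Finset.sum_congr rfl fun l _ => by rw [hT]; ring
  have hpair : ∀ i l, 0 ≤ T i l + T l i := by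
    intro i l
    by_cases hil : i = l
    · subst hil
      have hφi := (hφ i).ne'
      have hψi := (hψ i).ne'
      have : T i i = 0 := by
        rw [hT]
        field_simp
        ring
      rw [this]; norm_num
    · have hD : D i l ≤ 0 := hoff i l hil
      have key : φ l * (φ i - ψ i^2 / φ i) + ψ l * (ψ i - φ i^2 / ψ i)
          + (φ i * (φ l - ψ l^2 / φ l) + ψ i * (ψ l - φ l^2 / ψ l)) ≤ 0 := by
        have := amgm_aux (φ i) (φ l) (ψ i) (ψ l) (hφ i) (hφ l) (hψ i) (hψ l)
        have e1 : φ l * (φ i - ψ i^2 / φ i) + ψ l * (ψ i - φ i^2 / ψ i)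
            + (φ i * (φ l - ψ l^2 / φ l) + ψ i * (ψ l - φ l^2 / ψ l))
            = 2*(φ i * φ l) + 2*(ψ i * ψ l)
              - ((φ l * ψ i^2 / φ i + φ i * ψ l^2 / φ l) + (ψ l * φ i^2/ψ i + ψ i * φ l^2/ψ l)) := by
          ring
        rw [e1]
        linarith [amgm_aux (φ i) (φ l) (ψ i) (ψ l) (hφ i) (hφ l) (hψ i) (hψ l)]
      have : T i l + T l i = D i l * (φ l * (φ i - ψ i^2 / φ i) + ψ l * (ψ i - φ i^2 / ψ i)
          + (φ i * (φ l - ψ l^2 / φ l) + ψ i * (ψ l - φ l^2 / ψ l))) := by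
        rw [hT]
        simp only []
        rw [hsymm l i]
        ring
      rw [this]
      nlinarith [mul_nonneg (neg_nonneg.2 hD) (neg_nonneg.2 key)]
  have h2K : 0 ≤ 2 * ∑ i, ∑ l, T i l := by
    have hswap : ∑ i, ∑ l, T i l = ∑ i, ∑ l, T l i := Finset.sum_comm
    have : 2 * ∑ i, ∑ l, T i l = ∑ i, ∑ l, (T i l + T l i) := by
      rw [two_mul]
      nth_rewrite 2 [hswap]
      rw [← Finset.sum_add_distrib]
      refine Finset.sum_congr rfl fun i _ => by rw [← Finset.sum_add_distrib]
    rw [this]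
    exact Finset.sum_nonneg fun i _ => Finset.sum_nonneg fun l _ => hpair i l
  rw [hK]
  linarith

lemma GP_unique {n : ℕ} (hn : 1 ≤ n) (h : ℝ) (hh : 0 < h)
    (D : Matrix (Fin n) (Fin n) ℝ)
    (hsymm : ∀ i j, D i j = D j i) (hoff : ∀ i j, i ≠ j → D i j ≤ 0)
    (β : ℝ) (hβ : 0 < β) (lam mu : ℝ) (φ ψ : Fin n → ℝ)
    (hφpos : ∀ i, 0 < φ i) (hψpos : ∀ i, 0 < ψ i)
    (heqφ : ∀ i, D.mulVec φ i + β * φ i^3 = lam * φ i)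
    (heqψ : ∀ i, D.mulVec ψ i + β * ψ i^3 = mu * ψ i)
    (hφn : h * ∑ i, φ i^2 = 1) (hψn : h * ∑ i, ψ i^2 = 1) :
    lam = mu ∧ φ = ψ := by
  have hS : ∑ i, (φ i^2 - ψ i^2) = 0 := by
    rw [Finset.sum_sub_distrib]
    have : h * ∑ i, φ i^2 = h * ∑ i, ψ i^2 := by rw [hφn, hψn]
    have := mul_left_cancel₀ (ne_of_gt hh) this
    linarith
  have hP := picone D hsymm hoff φ ψ hφpos hψpos
  have e1 : ∀ i, D.mulVec φ i * (φ i - ψ i^2/φ i) + D.mulVec ψ i * (ψ i - φ i^2/ψ i)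
      = (lam - mu)*(φ i^2 - ψ i^2) - β*(φ i^2 - ψ i^2)^2 := by
    intro i
    have h1 : D.mulVec φ i = lam * φ i - β * φ i^3 := by linarith [heqφ i]
    have h2 : D.mulVec ψ i = mu * ψ i - β * ψ i^3 := by linarith [heqψ i]
    rw [h1, h2]
    have hφi := (hφpos i).ne'
    have hψi := (hψpos i).ne'
    field_simp
    ring
  have hK : (∑ i, D.mulVec φ i * (φ i - ψ i^2 / φ i))
      + ∑ i, D.mulVec ψ i * (ψ i - φ i^2 / ψ i)
      = (lam - mu) * ∑ i, (φ i^2 - ψ i^2) - β * ∑ i, (φ i^2 - ψ i^2)^2 := by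
    rw [← Finset.sum_add_distrib, Finset.mul_sum, Finset.mul_sum, ← Finset.sum_sub_distrib]
    exact Finset.sum_congr rfl fun i _ => e1 i
  rw [hK, hS] at hP
  have hsum0 : ∑ i, (φ i^2 - ψ i^2)^2 = 0 := by
    have h1 : β * ∑ i, (φ i^2 - ψ i^2)^2 ≤ 0 := by linarith
    have h2 : 0 ≤ ∑ i, (φ i^2 - ψ i^2)^2 :=
      Finset.sum_nonneg fun i _ => sq_nonneg _
    nlinarith
  have heach : ∀ i, φ i = ψ i := by
    intro i
    have := (Finset.sum_eq_zero_iff_of_nonneg (fun i _ => sq_nonneg (φ i^2 - ψ i^2))).1 hsum0 i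
      (Finset.mem_univ i)
    have hsq : φ i^2 = ψ i^2 := by nlinarith [this]
    nlinarith [hφpos i, hψpos i]
  have hφψ : φ = ψ := funext heach
  constructor
  · have i0 : Fin n := ⟨0, hn⟩
    have h1 := heqφ i0
    have h2 := heqψ i0
    rw [hφψ] at h1
    have := (hψpos i0).ne'
    have : lam * ψ i0 = mu * ψ i0 := by linarith
    exact mul_right_cancel₀ (hψpos i0).ne' this
  · exact hφψ

section exist
variable {n : ℕ} (h : ℝ) (hh : 0 < h) (D : Matrix (Fin n) (Fin n) ℝ) (β : ℝ)

lemma GPE_continuous : Continuous (GPE D β) := by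
  have : GPE D β = fun x => (∑ i, x i * ∑ l, D i l * x l) + β / 2 * ∑ i, x i ^ 4 := rfl
  rw [this]
  fun_prop

lemma GPE_exists_min (hh : 0 < h) (hn : 1 ≤ n) :
    ∃ φ : Fin n → ℝ, (h * ∑ i, φ i ^ 2 = 1) ∧
      ∀ x : Fin n → ℝ, h * ∑ i, x i ^ 2 = 1 → GPE D β φ ≤ GPE D β x := by
  set S : Set (Fin n → ℝ) := {x | h * ∑ i, x i ^ 2 = 1} with hSdef
  have hclosed : IsClosed S := by
    have : Continuous fun x : Fin n → ℝ => h * ∑ i, x i ^ 2 := by fun_prop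
    exact isClosed_eq this continuous_const
  have hsub : S ⊆ Metric.closedBall 0 (Real.sqrt (1/h)) := by
    intro x hx
    rw [Metric.mem_closedBall]
    have hr : (0:ℝ) ≤ Real.sqrt (1/h) := Real.sqrt_nonneg _
    rw [dist_pi_le_iff hr]
    intro i
    have hx' : h * ∑ l, x l ^ 2 = 1 := hx
    have hsum : ∑ l, x l ^ 2 = 1/h := by
      rw [eq_div_iff (ne_of_gt hh)]
      linarith
    have h1 : x i ^ 2 ≤ 1/h := by
      have := Finset.single_le_sum (f := fun l => x l ^ 2) (fun l _ => sq_nonneg _)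
        (Finset.mem_univ i)
      rw [hsum] at this
      exact this
    have : |x i| ≤ Real.sqrt (1/h) := by
      rw [← Real.sqrt_sq_eq_abs]
      exact Real.sqrt_le_sqrt h1
    simpa [Real.dist_eq] using this
  have hcomp : IsCompact S :=
    IsCompact.of_isClosed_subset (isCompact_closedBall _ _) hclosed hsub
  have hne : S.Nonempty := by
    refine ⟨fun _ => Real.sqrt (1/(h*n)), ?_⟩
    have hn0 : (0:ℝ) < (n:ℝ) := by exact_mod_cast hn
    have hpos : (0:ℝ) < 1/(h*n) := by positivity
    show h * ∑ _i : Fin n, (Real.sqrt (1/(h*n)))^2 = 1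
    rw [Real.sq_sqrt (le_of_lt hpos), Finset.sum_const, Finset.card_univ, Fintype.card_fin]
    rw [nsmul_eq_mul]
    field_simp
  obtain ⟨φ, hφS, hφmin⟩ := hcomp.exists_isMinOn hne (GPE_continuous D β).continuousOn
  exact ⟨φ, hφS, fun x hx => hφmin hx⟩

end exist

/-- existence and uniqueness of the positive normalized eigenpair
for the 1D discretized Gross–Pitaevskii problem. -/
theorem stmt_6 (n : ℕ) (hn : 1 ≤ n) (h : ℝ) (hh : 0 < h)
    (v : Fin n → ℝ) (hv : ∀ i, 0 ≤ v i)
    (D : Matrix (Fin n) (Fin n) ℝ)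
    (hDdiag : ∀ i : Fin n, D i i = 1 / h ^ 2 + v i)
    (hDoff : ∀ i j : Fin n, |(i : ℤ) - (j : ℤ)| = 1 → D i j = -(1 / (2 * h ^ 2)))
    (hDzero : ∀ i j : Fin n, 2 ≤ |(i : ℤ) - (j : ℤ)| → D i j = 0)
    (β : ℝ) (hβ : 0 < β) :
    ∃! p : ℝ × (Fin n → ℝ), (∀ i, 0 < p.2 i) ∧
      D.mulVec p.2 + β • (fun i => p.2 i ^ 3) = p.1 • p.2 ∧
      h * (∑ i, p.2 i ^ 2) = 1 := by
  classical
  have hne_ij : ∀ i j : Fin n, i ≠ j → ((i:ℤ) - (j:ℤ)) ≠ 0 := by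
    intro i j hij hcon
    exact hij (Fin.ext (by omega))
  have hsymm : ∀ i j, D i j = D j i := by
    intro i j
    rcases eq_or_ne i j with rfl | hij
    · rfl
    · by_cases h1 : |(i:ℤ) - (j:ℤ)| = 1
      · rw [hDoff i j h1, hDoff j i (by rw [abs_sub_comm]; exact h1)]
      · have h0 : 0 < |(i:ℤ) - (j:ℤ)| := abs_pos.2 (hne_ij i j hij)
        have h2 : 2 ≤ |(i:ℤ) - (j:ℤ)| := by omega
        rw [hDzero i j h2, hDzero j i (by rw [abs_sub_comm]; exact h2)]
  have hoff : ∀ i j, i ≠ j → D i j ≤ 0 := by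
    intro i j hij
    by_cases h1 : |(i:ℤ) - (j:ℤ)| = 1
    · rw [hDoff i j h1]
      have : (0:ℝ) < 1 / (2*h^2) := by positivity
      linarith
    · have h0 : 0 < |(i:ℤ) - (j:ℤ)| := abs_pos.2 (hne_ij i j hij)
      have h2 : 2 ≤ |(i:ℤ) - (j:ℤ)| := by omega
      rw [hDzero i j h2]
  obtain ⟨φ₀, hφ₀S, hφ₀min⟩ := GPE_exists_min h D β hh hn
  set ψ : Fin n → ℝ := fun i => |φ₀ i| with hψdef
  have hψS : h * ∑ i, ψ i ^ 2 = 1 := by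
    simpa only [hψdef, sq_abs] using hφ₀S
  have habsF : ∑ i, ψ i ^ 4 = ∑ i, φ₀ i ^ 4 := by
    refine Finset.sum_congr rfl fun i _ => ?_
    rw [hψdef]
    simp only []
    rw [← abs_pow]
    exact abs_of_nonneg (by positivity)
  have habsQ : ∑ i, ψ i * D.mulVec ψ i ≤ ∑ i, φ₀ i * D.mulVec φ₀ i := by
    have expand : ∀ y : Fin n → ℝ, ∑ i, y i * D.mulVec y i = ∑ i, ∑ l, y i * (D i l * y l) := by
      intro y
      exact Finset.sum_congr rfl fun i _ => by rw [mulVec_sum, Finset.mul_sum]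
    rw [expand, expand]
    refine Finset.sum_le_sum fun i _ => Finset.sum_le_sum fun l _ => ?_
    rcases eq_or_ne i l with rfl | hil
    · apply le_of_eq
      have e1 : ψ i * (D i i * ψ i) = D i i * ψ i ^ 2 := by ring
      have e2 : φ₀ i * (D i i * φ₀ i) = D i i * φ₀ i ^ 2 := by ring
      rw [e1, e2, hψdef]
      simp only []
      rw [sq_abs]
    · have hD := hoff i l hil
      have habs : φ₀ i * φ₀ l ≤ |φ₀ i| * |φ₀ l| := by
        rw [← abs_mul]; exact le_abs_self _
      have := mul_le_mul_of_nonpos_left habs hD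
      rw [hψdef]
      simp only []
      nlinarith [this]
  have hψmin : ∀ x : Fin n → ℝ, h * ∑ i, x i ^ 2 = 1 → GPE D β ψ ≤ GPE D β x := by
    intro x hx
    have h1 : GPE D β ψ ≤ GPE D β φ₀ := by
      unfold GPE
      rw [habsF]
      linarith [habsQ]
    exact h1.trans (hφ₀min x hx)
  set lam : ℝ := h * (∑ i, ψ i * D.mulVec ψ i) + h * β * ∑ i, ψ i ^ 4 with hlam
  have heq : ∀ j, D.mulVec ψ j + β * ψ j ^ 3 = lam * ψ j := fun j =>
    GPE_stationary h hh D hsymm β ψ hψS hψmin j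
  have hψnn : ∀ i, 0 ≤ ψ i := fun i => abs_nonneg _
  have hψpos : ∀ k, 0 < ψ k := by
    intro k
    rcases (hψnn k).lt_or_eq with hk | hk
    · exact hk
    exfalso
    have hm : ∃ m, ψ m ≠ 0 := by
      by_contra hcon
      push_neg at hcon
      rw [Finset.sum_congr rfl fun i _ => by rw [hcon i]] at hψS
      norm_num at hψS
    obtain ⟨m, hm⟩ := hm
    obtain ⟨i, j, hij1, hPi, hPj⟩ :=
      chain_aux (fun i => ψ i ≠ 0) (((m:ℤ) - (k:ℤ)).natAbs) m k rfl hm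
        (by simpa using hk.symm)
    have hψi : 0 < ψ i := (hψnn i).lt_of_ne (Ne.symm hPi)
    have hψj0 : ψ j = 0 := not_not.1 hPj
    have heqj := heq j
    rw [hψj0] at heqj
    have hDj : D.mulVec ψ j = 0 := by
      norm_num at heqj
      linarith [heqj]
    have hlt : D.mulVec ψ j < 0 := by
      rw [mulVec_sum]
      have hji : i ≠ j := by
        intro hcon
        rw [hcon, hψj0] at hψi
        exact lt_irrefl _ hψi
      calc ∑ l, D j l * ψ l < ∑ _l : Fin n, (0:ℝ) := by
            refine Finset.sum_lt_sum (fun l _ => ?_) ⟨i, Finset.mem_univ i, ?_⟩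
            · rcases eq_or_ne l j with rfl | hlj
              · rw [hψj0]; norm_num
              · exact mul_nonpos_iff.2 (Or.inr ⟨hoff j l (Ne.symm hlj), hψnn l⟩)
            · have hDji : D j i = -(1 / (2*h^2)) :=
                hDoff j i (by rw [abs_sub_comm]; exact hij1)
              rw [hDji]
              have h2 : (0:ℝ) < 1 / (2*h^2) := by positivity
              nlinarith [hψi]
      _ = 0 := by simp
    rw [hDj] at hlt
    exact lt_irrefl _ hlt
  refine ⟨(lam, ψ), ⟨hψpos, ?_, hψS⟩, ?_⟩
  · funext i
    have := heq i
    simp only [Pi.add_apply, Pi.smul_apply, smul_eq_mul]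
    exact this
  · rintro ⟨mu, χ⟩ ⟨hχpos, hχeq, hχS⟩
    have hχeq' : ∀ i, D.mulVec χ i + β * χ i ^ 3 = mu * χ i := by
      intro i
      have := congrFun hχeq i
      simpa using this
    obtain ⟨hlameq, hvec⟩ :=
      GP_unique hn h hh D hsymm hoff β hβ mu lam χ ψ hχpos hψpos hχeq' heq hχS hψS
    exact Prod.ext hlameq hvec
end

section
/- Let β > 0. Then there exist λ ∈ ℝ and φ indexed by Fin m × Fin n with φ (i,j) > 0 for all (i,j) such that D φ + β φ³ = λ φ and h₁ h₂ · φᵀφ = 1; moreover the pair (λ, φ) with these properties is unique. -/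
open Finset

section GPAux

/-! ### Auxiliary lemmas for the discretized Gross–Pitaevskii eigenproblem -/

lemma gp_sum_poly2 {γ : Type*} (s : Finset γ) (f g h : γ → ℝ) (t : ℝ) :
    ∑ i ∈ s, (f i + g i * t + h i * t ^ 2)
      = (∑ i ∈ s, f i) + (∑ i ∈ s, g i) * t + (∑ i ∈ s, h i) * t ^ 2 := by
  rw [sum_add_distrib, sum_add_distrib, sum_mul, sum_mul]

lemma gp_sum_poly4 {γ : Type*} (s : Finset γ) (f g h k l : γ → ℝ) (t : ℝ) :
    ∑ i ∈ s, (f i + g i * t + h i * t ^ 2 + k i * t ^ 3 + l i * t ^ 4)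
      = (∑ i ∈ s, f i) + (∑ i ∈ s, g i) * t + (∑ i ∈ s, h i) * t ^ 2
        + (∑ i ∈ s, k i) * t ^ 3 + (∑ i ∈ s, l i) * t ^ 4 := by
  rw [sum_add_distrib, sum_add_distrib, sum_add_distrib, sum_add_distrib,
    sum_mul, sum_mul, sum_mul, sum_mul]

lemma gp_sum_lin3 {γ : Type*} (s : Finset γ) (x y z : γ → ℝ) (a b c : ℝ) :
    ∑ i ∈ s, (a * x i + b * y i + c * z i)
      = a * ∑ i ∈ s, x i + b * ∑ i ∈ s, y i + c * ∑ i ∈ s, z i := by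
  rw [sum_add_distrib, sum_add_distrib, ← mul_sum, ← mul_sum, ← mul_sum]

lemma gp_bracket_le (a b x y : ℝ) (ha : 0 < a) (hb : 0 < b) (hx : 0 < x) (hy : 0 < y) :
    b * (a - x ^ 2 / a) + y * (x - a ^ 2 / x)
      + (a * (b - y ^ 2 / b) + x * (y - b ^ 2 / y)) ≤ 0 := by
  have key1 : b * (x ^ 2 / a) + a * (y ^ 2 / b) - 2 * (x * y)
      = (b * x - a * y) ^ 2 / (a * b) := by field_simp; ring
  have key2 : y * (a ^ 2 / x) + x * (b ^ 2 / y) - 2 * (a * b)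
      = (y * a - x * b) ^ 2 / (x * y) := by field_simp; ring
  have h1 : (0:ℝ) ≤ (b * x - a * y) ^ 2 / (a * b) := by positivity
  have h2 : (0:ℝ) ≤ (y * a - x * b) ^ 2 / (x * y) := by positivity
  nlinarith [h1, h2]

lemma gp_fin_step {k : ℕ} (i j : Fin k) (h : i ≠ j) :
    ∃ i' : Fin k, |(i : ℤ) - (i' : ℤ)| = 1 ∧
      ((i' : ℤ) - (j : ℤ)).natAbs < ((i : ℤ) - (j : ℤ)).natAbs := by
  have hv : i.val ≠ j.val := fun hh => h (Fin.ext hh)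
  rcases lt_or_gt_of_ne hv with hlt | hgt
  · refine ⟨⟨i.val + 1, by omega⟩, ?_, ?_⟩
    · rw [abs_eq (by norm_num : (0:ℤ) ≤ 1)]; push_cast; omega
    · push_cast; omega
  · have h0 : 1 ≤ i.val := by omega
    refine ⟨⟨i.val - 1, by omega⟩, ?_, ?_⟩
    · rw [abs_eq (by norm_num : (0:ℤ) ≤ 1)]; push_cast; omega
    · push_cast; omega

lemma gp_grid_conn {m n : ℕ} (Z : Set (Fin m × Fin n)) (q : Fin m × Fin n) (hq : q ∉ Z) :
    ∀ d : ℕ, ∀ p : Fin m × Fin n, p ∈ Z →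
      ((p.1 : ℤ) - (q.1 : ℤ)).natAbs + ((p.2 : ℤ) - (q.2 : ℤ)).natAbs ≤ d →
      ∃ a b : Fin m × Fin n, a ∈ Z ∧ b ∉ Z ∧
        ((a.1 = b.1 ∧ |(a.2 : ℤ) - (b.2 : ℤ)| = 1) ∨
         (a.2 = b.2 ∧ |(a.1 : ℤ) - (b.1 : ℤ)| = 1)) := by
  intro d
  induction d with
  | zero =>
    intro p hp hd
    exfalso
    have h1 : p.1 = q.1 := by
      have h0 := Nat.le_zero.mp hd
      have h1' : ((p.1 : ℤ) - (q.1 : ℤ)).natAbs = 0 := by omega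
      have : (p.1 : ℤ) = (q.1 : ℤ) := by omega
      exact Fin.ext (by exact_mod_cast this)
    have h2 : p.2 = q.2 := by
      have h0 := Nat.le_zero.mp hd
      have h2' : ((p.2 : ℤ) - (q.2 : ℤ)).natAbs = 0 := by omega
      have : (p.2 : ℤ) = (q.2 : ℤ) := by omega
      exact Fin.ext (by exact_mod_cast this)
    exact hq (by rwa [Prod.ext_iff.mpr ⟨h1, h2⟩] at hp)
  | succ d ih =>
    intro p hp hd
    by_cases h1 : p.1 = q.1
    · by_cases h2 : p.2 = q.2
      · exact absurd (by rwa [Prod.ext_iff.mpr ⟨h1, h2⟩] at hp) hq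
      · obtain ⟨j', hj1, hj2⟩ := gp_fin_step p.2 q.2 h2
        set r : Fin m × Fin n := (p.1, j') with hr
        by_cases hrZ : r ∈ Z
        · exact ih r hrZ (by simp only [hr]; omega)
        · exact ⟨p, r, hp, hrZ, Or.inl ⟨rfl, hj1⟩⟩
    · obtain ⟨i', hi1, hi2⟩ := gp_fin_step p.1 q.1 h1
      set r : Fin m × Fin n := (i', p.2) with hr
      by_cases hrZ : r ∈ Z
      · exact ih r hrZ (by simp only [hr]; omega)
      · exact ⟨p, r, hp, hrZ, Or.inr ⟨rfl, hi1⟩⟩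

lemma gp_grid_conn' {m n : ℕ} (Z : Set (Fin m × Fin n)) (p q : Fin m × Fin n)
    (hp : p ∈ Z) (hq : q ∉ Z) :
    ∃ a b : Fin m × Fin n, a ∈ Z ∧ b ∉ Z ∧
      ((a.1 = b.1 ∧ |(a.2 : ℤ) - (b.2 : ℤ)| = 1) ∨
       (a.2 = b.2 ∧ |(a.1 : ℤ) - (b.1 : ℤ)| = 1)) :=
  gp_grid_conn Z q hq _ p hp le_rfl

end GPAux
section GPAux2

lemma gp_uniq_core {ι : Type*} [Fintype ι] [Nonempty ι]
    (D : Matrix ι ι ℝ) (hsym : ∀ p q, D p q = D q p) (hoff : ∀ p q, p ≠ q → D p q ≤ 0)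
    (β : ℝ) (hβ : 0 < β) (lam mu : ℝ) (φ ψ : ι → ℝ)
    (hφ : ∀ p, 0 < φ p) (hψ : ∀ p, 0 < ψ p)
    (heqφ : ∀ p, (∑ q, D p q * φ q) + β * φ p ^ 3 = lam * φ p)
    (heqψ : ∀ p, (∑ q, D p q * ψ q) + β * ψ p ^ 3 = mu * ψ p)
    (hnorm : ∑ q, φ q ^ 2 = ∑ q, ψ q ^ 2) :
    lam = mu ∧ φ = ψ := by
  set G : ι → ι → ℝ := fun p q =>
    D p q * (φ q * (φ p - ψ p ^ 2 / φ p) + ψ q * (ψ p - φ p ^ 2 / ψ p)) with hG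
  set T : ℝ := ∑ p, ∑ q, G p q with hT
  have hTval : T = -β * ∑ p, (φ p ^ 2 - ψ p ^ 2) ^ 2 := by
    have hinner : ∀ p, ∑ q, G p q
        = (lam * φ p - β * φ p ^ 3) * (φ p - ψ p ^ 2 / φ p)
          + (mu * ψ p - β * ψ p ^ 3) * (ψ p - φ p ^ 2 / ψ p) := by
      intro p
      have e1 : ∑ q, G p q
          = (∑ q, D p q * φ q) * (φ p - ψ p ^ 2 / φ p)
            + (∑ q, D p q * ψ q) * (ψ p - φ p ^ 2 / ψ p) := by
        rw [sum_mul, sum_mul, ← sum_add_distrib]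
        exact Finset.sum_congr rfl fun q _ => by simp only [hG]; ring
      have e2 : ∑ q, D p q * φ q = lam * φ p - β * φ p ^ 3 := by linarith [heqφ p]
      have e3 : ∑ q, D p q * ψ q = mu * ψ p - β * ψ p ^ 3 := by linarith [heqψ p]
      rw [e1, e2, e3]
    have hptwise : ∀ p, (lam * φ p - β * φ p ^ 3) * (φ p - ψ p ^ 2 / φ p)
          + (mu * ψ p - β * ψ p ^ 3) * (ψ p - φ p ^ 2 / ψ p)
        = lam * (φ p ^ 2 - ψ p ^ 2) + mu * (ψ p ^ 2 - φ p ^ 2)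
          + (-β) * ((φ p ^ 2 - ψ p ^ 2) ^ 2) := by
      intro p
      have h1 : φ p ≠ 0 := (hφ p).ne'
      have h2 : ψ p ≠ 0 := (hψ p).ne'
      field_simp
      ring
    calc T = ∑ p, (lam * (φ p ^ 2 - ψ p ^ 2) + mu * (ψ p ^ 2 - φ p ^ 2)
          + (-β) * ((φ p ^ 2 - ψ p ^ 2) ^ 2)) := by
            rw [hT]; exact Finset.sum_congr rfl fun p _ => by rw [hinner p, hptwise p]
      _ = lam * ∑ p, (φ p ^ 2 - ψ p ^ 2) + mu * ∑ p, (ψ p ^ 2 - φ p ^ 2)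
          + (-β) * ∑ p, (φ p ^ 2 - ψ p ^ 2) ^ 2 := gp_sum_lin3 _ _ _ _ _ _ _
      _ = -β * ∑ p, (φ p ^ 2 - ψ p ^ 2) ^ 2 := by
            rw [Finset.sum_sub_distrib, Finset.sum_sub_distrib, hnorm]; ring
  have hTnonneg : 0 ≤ T := by
    have hswap : ∑ p : ι, ∑ q : ι, G q p = T := Finset.sum_comm
    have e : (∑ p : ι, ∑ q : ι, (G p q + G q p))
        = (∑ p : ι, ∑ q : ι, G p q) + (∑ p : ι, ∑ q : ι, G q p) := by
      rw [← Finset.sum_add_distrib]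
      exact Finset.sum_congr rfl fun p _ => Finset.sum_add_distrib
    have h2T : ∑ p : ι, ∑ q : ι, (G p q + G q p) = T + T := by rw [e, hswap, ← hT]
    have hterm : ∀ p q, 0 ≤ G p q + G q p := by
      intro p q
      by_cases hpq : p = q
      · subst hpq
        have hzero : G p p = 0 := by
          have h1 : φ p ≠ 0 := (hφ p).ne'
          have h2 : ψ p ≠ 0 := (hψ p).ne'
          simp only [hG]
          have e0 : φ p * (φ p - ψ p ^ 2 / φ p) + ψ p * (ψ p - φ p ^ 2 / ψ p) = 0 := by
            field_simp; ring
          rw [e0, mul_zero]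
        rw [hzero]; norm_num
      · have hd : D p q ≤ 0 := hoff p q hpq
        have hbr := gp_bracket_le (φ p) (φ q) (ψ p) (ψ q) (hφ p) (hφ q) (hψ p) (hψ q)
        have e0 : G p q + G q p = D p q *
            (φ q * (φ p - ψ p ^ 2 / φ p) + ψ q * (ψ p - φ p ^ 2 / ψ p)
             + (φ p * (φ q - ψ q ^ 2 / φ q) + ψ p * (ψ q - φ q ^ 2 / ψ q))) := by
          simp only [hG, hsym q p]; ring
        rw [e0]
        exact mul_nonneg_iff.mpr (Or.inr ⟨hd, hbr⟩)
    have : 0 ≤ T + T := h2T ▸ Finset.sum_nonneg fun p _ =>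
      Finset.sum_nonneg fun q _ => hterm p q
    linarith
  have hle : ∑ p, (φ p ^ 2 - ψ p ^ 2) ^ 2 ≤ 0 := by
    have h0 : 0 ≤ -β * ∑ p, (φ p ^ 2 - ψ p ^ 2) ^ 2 := hTval ▸ hTnonneg
    nlinarith [h0, hβ]
  have hge : 0 ≤ ∑ p, (φ p ^ 2 - ψ p ^ 2) ^ 2 :=
    Finset.sum_nonneg fun p _ => sq_nonneg _
  have hzero : ∑ p, (φ p ^ 2 - ψ p ^ 2) ^ 2 = 0 := le_antisymm hle hge
  have hsumzero : ∀ p : ι, (φ p ^ 2 - ψ p ^ 2) ^ 2 = 0 := fun p =>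
    (Finset.sum_eq_zero_iff_of_nonneg (fun q _ => sq_nonneg _)).mp hzero p (Finset.mem_univ p)
  have hφψ : φ = ψ := by
    funext p
    have h0 := hsumzero p
    have h1 : φ p ^ 2 - ψ p ^ 2 = 0 := by
      have := sq_eq_zero_iff.mp h0
      linarith
    have h2 : (φ p - ψ p) * (φ p + ψ p) = 0 := by linear_combination h1
    rcases mul_eq_zero.mp h2 with h3 | h3
    · linarith
    · linarith [hφ p, hψ p]
  constructor
  · obtain ⟨p⟩ := ‹Nonempty ι›
    have h1 := heqφ p
    have h2 := heqψ p
    rw [hφψ] at h1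
    have : lam * ψ p = mu * ψ p := by linarith
    exact mul_right_cancel₀ (hψ p).ne' this
  · exact hφψ


lemma gp_euler_lagrange {ι : Type*} [Fintype ι]
    (D : Matrix ι ι ℝ) (hsym : ∀ p q, D p q = D q p)
    (β K : ℝ) (hK : 0 < K)
    (φ : ι → ℝ) (hφS : K * ∑ q, φ q ^ 2 = 1)
    (hmin : IsMinOn (fun ψ : ι → ℝ => (∑ p, ∑ q, D p q * ψ p * ψ q) + β / 2 * ∑ q, ψ q ^ 4)
        {ψ : ι → ℝ | K * ∑ q, ψ q ^ 2 = 1} φ)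
    (r : ι) :
    (∑ q, D r q * φ q) + β * φ r ^ 3
      = (K * ((∑ p, ∑ q, D p q * φ p * φ q) + β * ∑ q, φ q ^ 4)) * φ r := by
  classical
  set w : ι → ℝ := fun q => if q = r then (1:ℝ) else 0 with hw
  set a0 : ℝ := ∑ p, ∑ q, D p q * φ p * φ q with ha0
  set a1 : ℝ := ∑ p, ∑ q, D p q * (w p * φ q + φ p * w q) with ha1
  set a2 : ℝ := ∑ p, ∑ q, D p q * (w p * w q) with ha2
  set n1 : ℝ := K * ∑ q, 2 * (φ q * w q) with hn1
  set n2 : ℝ := K * ∑ q, w q ^ 2 with hn2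
  set b0 : ℝ := ∑ q, φ q ^ 4 with hb0
  set b1 : ℝ := ∑ q, 4 * (φ q ^ 3 * w q) with hb1
  set b2 : ℝ := ∑ q, 6 * (φ q ^ 2 * w q ^ 2) with hb2
  set b3 : ℝ := ∑ q, 4 * (φ q * w q ^ 3) with hb3
  set b4 : ℝ := ∑ q, w q ^ 4 with hb4
  -- polynomial identities
  have hA : ∀ t : ℝ, ∑ p, ∑ q, D p q * (φ p + t * w p) * (φ q + t * w q)
      = a0 + a1 * t + a2 * t ^ 2 := by
    intro t
    have inner : ∀ p : ι, ∑ q, D p q * (φ p + t * w p) * (φ q + t * w q)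
        = (∑ q, D p q * φ p * φ q) + (∑ q, D p q * (w p * φ q + φ p * w q)) * t
          + (∑ q, D p q * (w p * w q)) * t ^ 2 := by
      intro p
      rw [← gp_sum_poly2]
      exact Finset.sum_congr rfl fun q _ => by ring
    rw [Finset.sum_congr rfl fun p _ => inner p, gp_sum_poly2, ha0, ha1, ha2]
  have hN : ∀ t : ℝ, K * ∑ q, (φ q + t * w q) ^ 2 = 1 + n1 * t + n2 * t ^ 2 := by
    intro t
    have e : ∑ q, (φ q + t * w q) ^ 2
        = (∑ q, φ q ^ 2) + (∑ q, 2 * (φ q * w q)) * t + (∑ q, w q ^ 2) * t ^ 2 := by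
      rw [← gp_sum_poly2]
      exact Finset.sum_congr rfl fun q _ => by ring
    rw [e, hn1, hn2]
    linear_combination hφS
  have hB : ∀ t : ℝ, ∑ q, (φ q + t * w q) ^ 4
      = b0 + b1 * t + b2 * t ^ 2 + b3 * t ^ 3 + b4 * t ^ 4 := by
    intro t
    rw [hb0, hb1, hb2, hb3, hb4, ← gp_sum_poly4]
    exact Finset.sum_congr rfl fun q _ => by ring
  clear_value a0 a1 a2 n1 n2 b0 b1 b2 b3 b4
  -- the one-dimensional function
  set F : ℝ → ℝ := fun t => (a0 + a1 * t + a2 * t ^ 2) / (1 + n1 * t + n2 * t ^ 2)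
      + (β / 2) * ((b0 + b1 * t + b2 * t ^ 2 + b3 * t ^ 3 + b4 * t ^ 4)
          / (1 + n1 * t + n2 * t ^ 2) ^ 2) with hF
  have hF0 : F 0 = a0 + β / 2 * b0 := by simp [hF]
  -- local minimum at 0
  have hQcont : Continuous fun t : ℝ => 1 + n1 * t + n2 * t ^ 2 := by continuity
  have hQev : ∀ᶠ t : ℝ in nhds 0, 0 < 1 + n1 * t + n2 * t ^ 2 := by
    have h0 : (0:ℝ) < 1 + n1 * 0 + n2 * 0 ^ 2 := by norm_num
    exact (hQcont.continuousAt (x := 0)).eventually (eventually_gt_nhds h0)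
  have hlocmin : IsLocalMin F 0 := by
    filter_upwards [hQev] with t hQt
    set c : ℝ := (Real.sqrt (1 + n1 * t + n2 * t ^ 2))⁻¹ with hc
    have hsq : Real.sqrt (1 + n1 * t + n2 * t ^ 2) ^ 2 = 1 + n1 * t + n2 * t ^ 2 :=
      Real.sq_sqrt hQt.le
    have hc2 : c ^ 2 = (1 + n1 * t + n2 * t ^ 2)⁻¹ := by rw [hc, inv_pow, hsq]
    set u : ι → ℝ := fun q => c * (φ q + t * w q) with hu
    have husum : ∑ q, u q ^ 2 = c ^ 2 * ∑ q, (φ q + t * w q) ^ 2 := by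
      rw [mul_sum]; exact sum_congr rfl fun q _ => by simp only [hu]; ring
    have huS : K * ∑ q, u q ^ 2 = 1 := by
      rw [husum, hc2]
      calc K * ((1 + n1 * t + n2 * t ^ 2)⁻¹ * ∑ q, (φ q + t * w q) ^ 2)
          = (1 + n1 * t + n2 * t ^ 2)⁻¹ * (K * ∑ q, (φ q + t * w q) ^ 2) := by ring
        _ = (1 + n1 * t + n2 * t ^ 2)⁻¹ * (1 + n1 * t + n2 * t ^ 2) := by rw [hN t]
        _ = 1 := inv_mul_cancel₀ hQt.ne'
    have hEu : (∑ p, ∑ q, D p q * u p * u q) + β / 2 * ∑ q, u q ^ 4 = F t := by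
      have e1 : ∑ p, ∑ q, D p q * u p * u q
          = c ^ 2 * ∑ p, ∑ q, D p q * (φ p + t * w p) * (φ q + t * w q) := by
        rw [mul_sum]
        refine sum_congr rfl fun p _ => ?_
        rw [mul_sum]
        exact sum_congr rfl fun q _ => by simp only [hu]; ring
      have e2 : ∑ q, u q ^ 4 = (c ^ 2) ^ 2 * ∑ q, (φ q + t * w q) ^ 4 := by
        rw [mul_sum]; exact sum_congr rfl fun q _ => by simp only [hu]; ring
      rw [e1, e2, hc2, hA t, hB t]
      simp only [hF]
      field_simp
    have hfφ := hmin huS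
    simp only [Set.mem_setOf_eq] at hfφ
    rw [hF0, ← hEu, ha0, hb0]
    exact hfφ
  have hP : HasDerivAt (fun t : ℝ => a0 + a1 * t + a2 * t ^ 2) a1 0 := by
    have h := (((hasDerivAt_id (0:ℝ)).const_mul a1).const_add a0).add
      ((hasDerivAt_pow 2 (0:ℝ)).const_mul a2)
    simpa [Pi.add_def] using h
  have hQd : HasDerivAt (fun t : ℝ => 1 + n1 * t + n2 * t ^ 2) n1 0 := by
    have h := (((hasDerivAt_id (0:ℝ)).const_mul n1).const_add 1).add
      ((hasDerivAt_pow 2 (0:ℝ)).const_mul n2)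
    simpa [Pi.add_def] using h
  have hR : HasDerivAt
      (fun t : ℝ => b0 + b1 * t + b2 * t ^ 2 + b3 * t ^ 3 + b4 * t ^ 4) b1 0 := by
    have h := (((((hasDerivAt_id (0:ℝ)).const_mul b1).const_add b0).add
      ((hasDerivAt_pow 2 (0:ℝ)).const_mul b2)).add
      ((hasDerivAt_pow 3 (0:ℝ)).const_mul b3)).add
      ((hasDerivAt_pow 4 (0:ℝ)).const_mul b4)
    simpa [Pi.add_def] using h
  have hdiv1 := hP.div hQd (by norm_num)
  have hdiv2 := hR.div (hQd.pow 2) (by norm_num)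
  have hFderiv : HasDerivAt F (a1 - a0 * n1 + β / 2 * (b1 - 2 * b0 * n1)) 0 := by
    have h := hdiv1.add (hdiv2.const_mul (β / 2))
    refine h.congr_deriv ?_
    simp only [Pi.pow_apply]
    push_cast
    ring
  have hd0 : a1 - a0 * n1 + β / 2 * (b1 - 2 * b0 * n1) = 0 := by
    rw [← hFderiv.deriv]
    exact hlocmin.deriv_eq_zero
  have e1 : a1 = (∑ p, ∑ q, D p q * (w p * φ q)) + ∑ p, ∑ q, D p q * (φ p * w q) := by
    rw [ha1, ← sum_add_distrib]
    refine sum_congr rfl fun p _ => ?_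
    rw [← sum_add_distrib]
    exact sum_congr rfl fun q _ => by ring
  have first : ∑ p, ∑ q, D p q * (w p * φ q) = ∑ q, D r q * φ q := by
    have inner1 : ∀ p, ∑ q, D p q * (w p * φ q) = w p * ∑ q, D p q * φ q := by
      intro p; rw [mul_sum]; exact sum_congr rfl fun q _ => by ring
    rw [Finset.sum_congr rfl fun p _ => inner1 p]
    simp [hw]
  have second : ∑ p, ∑ q, D p q * (φ p * w q) = ∑ q, D r q * φ q := by
    have inner2 : ∀ p, ∑ q, D p q * (φ p * w q) = D p r * φ p := by
      intro p; simp [hw, mul_ite, mul_one, mul_zero]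
    rw [Finset.sum_congr rfl fun p _ => inner2 p]
    exact sum_congr rfl fun p _ => by rw [hsym p r]
  have ha1' : a1 = 2 * ∑ q, D r q * φ q := by rw [e1, first, second]; ring
  have hn1' : n1 = K * (2 * φ r) := by rw [hn1]; simp [hw, mul_ite, mul_one, mul_zero]
  have hb1' : b1 = 4 * φ r ^ 3 := by rw [hb1]; simp [hw, mul_ite, mul_one, mul_zero]
  rw [ha1', hn1', hb1'] at hd0
  linear_combination hd0 / 2

end GPAux2

/-- existence and uniqueness of the positive normalized eigenpair
for the 2D discretized Gross–Pitaevskii problem. -/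
theorem stmt_7 (m n : ℕ) (hm : 1 ≤ m) (hn : 1 ≤ n)
    (h₁ h₂ : ℝ) (hh₁ : 0 < h₁) (hh₂ : 0 < h₂)
    (v : Fin m × Fin n → ℝ) (hv : ∀ p, 0 ≤ v p)
    (D : Matrix (Fin m × Fin n) (Fin m × Fin n) ℝ)
    (hDdiag : ∀ p : Fin m × Fin n, D p p = 1 / h₁ ^ 2 + 1 / h₂ ^ 2 + v p)
    (hDvert : ∀ (i : Fin m) (j j' : Fin n), |(j : ℤ) - (j' : ℤ)| = 1 →
      D (i, j) (i, j') = -(1 / (2 * h₂ ^ 2)))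
    (hDhor : ∀ (i i' : Fin m) (j : Fin n), |(i : ℤ) - (i' : ℤ)| = 1 →
      D (i, j) (i', j) = -(1 / (2 * h₁ ^ 2)))
    (hDzero : ∀ p q : Fin m × Fin n, p ≠ q →
      ¬(p.1 = q.1 ∧ |(p.2 : ℤ) - (q.2 : ℤ)| = 1) →
      ¬(p.2 = q.2 ∧ |(p.1 : ℤ) - (q.1 : ℤ)| = 1) → D p q = 0)
    (β : ℝ) (hβ : 0 < β) :
    ∃! p : ℝ × (Fin m × Fin n → ℝ), (∀ q, 0 < p.2 q) ∧
      D.mulVec p.2 + β • (fun q => p.2 q ^ 3) = p.1 • p.2 ∧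
      h₁ * h₂ * (∑ q, p.2 q ^ 2) = 1 := by
  classical
  haveI hne : Nonempty (Fin m × Fin n) := ⟨(⟨0, hm⟩, ⟨0, hn⟩)⟩
  set K : ℝ := h₁ * h₂ with hKdef
  have hK : 0 < K := mul_pos hh₁ hh₂
  -- symmetry of D
  have hsym : ∀ p q : Fin m × Fin n, D p q = D q p := by
    intro p q
    by_cases hpq : p = q
    · rw [hpq]
    · by_cases hij : p.1 = q.1 ∧ |(p.2 : ℤ) - (q.2 : ℤ)| = 1
      · obtain ⟨e1, e2⟩ := hij
        have t1 := hDvert p.1 p.2 q.2 e2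
        have t2 := hDvert p.1 q.2 p.2 (by rwa [abs_sub_comm])
        have hq' : (p.1, q.2) = q := by rw [e1]
        rw [hq'] at t1 t2
        rw [show p = (p.1, p.2) from rfl] at t1 t2 ⊢
        rw [t1, t2]
      · by_cases hji : p.2 = q.2 ∧ |(p.1 : ℤ) - (q.1 : ℤ)| = 1
        · obtain ⟨e1, e2⟩ := hji
          have t1 := hDhor p.1 q.1 p.2 e2
          have t2 := hDhor q.1 p.1 p.2 (by rwa [abs_sub_comm])
          have hq' : (q.1, p.2) = q := by rw [e1]
          rw [hq'] at t1 t2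
          rw [show p = (p.1, p.2) from rfl] at t1 t2 ⊢
          rw [t1, t2]
        · rw [hDzero p q hpq hij hji, hDzero q p (Ne.symm hpq)
            (fun h => hij ⟨h.1.symm, by rw [abs_sub_comm]; exact h.2⟩)
            (fun h => hji ⟨h.1.symm, by rw [abs_sub_comm]; exact h.2⟩)]
  -- off-diagonal entries are nonpositive
  have hoff : ∀ p q : Fin m × Fin n, p ≠ q → D p q ≤ 0 := by
    intro p q hpq
    by_cases hij : p.1 = q.1 ∧ |(p.2 : ℤ) - (q.2 : ℤ)| = 1
    · obtain ⟨e1, e2⟩ := hij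
      have t1 := hDvert p.1 p.2 q.2 e2
      have hq' : (p.1, q.2) = q := by rw [e1]
      rw [hq'] at t1
      rw [show p = (p.1, p.2) from rfl, t1]
      have : 0 < 1 / (2 * h₂ ^ 2) := by positivity
      linarith
    · by_cases hji : p.2 = q.2 ∧ |(p.1 : ℤ) - (q.1 : ℤ)| = 1
      · obtain ⟨e1, e2⟩ := hji
        have t1 := hDhor p.1 q.1 p.2 e2
        have hq' : (q.1, p.2) = q := by rw [e1]
        rw [hq'] at t1
        rw [show p = (p.1, p.2) from rfl, t1]
        have : 0 < 1 / (2 * h₁ ^ 2) := by positivity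
        linarith
      · rw [hDzero p q hpq hij hji]
  -- energy functional and constraint set
  set E : (Fin m × Fin n → ℝ) → ℝ := fun ψ =>
    (∑ p, ∑ q, D p q * ψ p * ψ q) + β / 2 * ∑ q, ψ q ^ 4 with hEdef
  set S : Set (Fin m × Fin n → ℝ) := {ψ | K * ∑ q, ψ q ^ 2 = 1} with hSdef
  have hgcont : Continuous fun ψ : Fin m × Fin n → ℝ => K * ∑ q, ψ q ^ 2 :=
    continuous_const.mul (continuous_finset_sum _ fun q _ => (continuous_apply q).pow 2)
  have hSclosed : IsClosed S := by
    have : S = (fun ψ : Fin m × Fin n → ℝ => K * ∑ q, ψ q ^ 2) ⁻¹' {1} := rfl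
    rw [this]
    exact isClosed_singleton.preimage hgcont
  have hSbdd : Bornology.IsBounded S := by
    apply (Metric.isBounded_closedBall (x := (0 : Fin m × Fin n → ℝ))
      (r := Real.sqrt (1 / K))).subset
    intro ψ hψ
    rw [Metric.mem_closedBall, dist_zero_right]
    rw [pi_norm_le_iff_of_nonneg (Real.sqrt_nonneg _)]
    intro q
    have hψS : K * ∑ q', ψ q' ^ 2 = 1 := hψ
    have hsum : ∑ q', ψ q' ^ 2 = 1 / K := by
      rw [eq_div_iff hK.ne']; linarith
    have h1 : ψ q ^ 2 ≤ 1 / K := by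
      rw [← hsum]
      exact Finset.single_le_sum (f := fun q' => ψ q' ^ 2)
        (fun i _ => sq_nonneg _) (Finset.mem_univ q)
    calc ‖ψ q‖ = Real.sqrt (ψ q ^ 2) := by
          rw [Real.sqrt_sq_eq_abs, Real.norm_eq_abs]
      _ ≤ Real.sqrt (1 / K) := Real.sqrt_le_sqrt h1
  have hScompact : IsCompact S := Metric.isCompact_of_isClosed_isBounded hSclosed hSbdd
  have hcard : 0 < (Fintype.card (Fin m × Fin n) : ℝ) := by
    have : 0 < Fintype.card (Fin m × Fin n) := Fintype.card_pos
    exact_mod_cast this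
  have hSne : S.Nonempty := by
    refine ⟨fun _ => Real.sqrt (1 / (K * Fintype.card (Fin m × Fin n))), ?_⟩
    have hc2 : Real.sqrt (1 / (K * Fintype.card (Fin m × Fin n))) ^ 2
        = 1 / (K * Fintype.card (Fin m × Fin n)) :=
      Real.sq_sqrt (by positivity)
    show K * ∑ _q : Fin m × Fin n,
        Real.sqrt (1 / (K * Fintype.card (Fin m × Fin n))) ^ 2 = 1
    rw [Finset.sum_const, Finset.card_univ, nsmul_eq_mul, hc2]
    field_simp
  have hEcont : Continuous E := by
    apply Continuous.add
    · exact continuous_finset_sum _ fun p _ => continuous_finset_sum _ fun q _ =>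
        (continuous_const.mul (continuous_apply p)).mul (continuous_apply q)
    · exact continuous_const.mul (continuous_finset_sum _ fun q _ => (continuous_apply q).pow 4)
  obtain ⟨φ₀, hφ₀S, hφ₀min⟩ := hScompact.exists_isMinOn hSne hEcont.continuousOn
  -- pass to absolute values
  set φ : Fin m × Fin n → ℝ := fun q => |φ₀ q| with hφdef
  have hφnonneg : ∀ q, 0 ≤ φ q := fun q => abs_nonneg _
  have hφS : K * ∑ q, φ q ^ 2 = 1 := by
    have : ∑ q, φ q ^ 2 = ∑ q, φ₀ q ^ 2 :=
      Finset.sum_congr rfl fun q _ => by simp [hφdef, sq_abs]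
    rw [this]; exact hφ₀S
  have hEφ : E φ ≤ E φ₀ := by
    have hquad : ∑ p, ∑ q, D p q * φ p * φ q ≤ ∑ p, ∑ q, D p q * φ₀ p * φ₀ q := by
      refine Finset.sum_le_sum fun p _ => Finset.sum_le_sum fun q _ => ?_
      by_cases hpq : p = q
      · subst hpq
        rw [show D p p * φ p * φ p = D p p * (φ p * φ p) from mul_assoc _ _ _,
          show D p p * φ₀ p * φ₀ p = D p p * (φ₀ p * φ₀ p) from mul_assoc _ _ _]
        simp only [hφdef, abs_mul_abs_self, le_refl]
      · have h1 : D p q ≤ 0 := hoff p q hpq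
        have h2 : φ₀ p * φ₀ q ≤ φ p * φ q := by
          simp only [hφdef]
          rw [← abs_mul]
          exact le_abs_self _
        calc D p q * φ p * φ q = D p q * (φ p * φ q) := mul_assoc _ _ _
          _ ≤ D p q * (φ₀ p * φ₀ q) := mul_le_mul_of_nonpos_left h2 h1
          _ = D p q * φ₀ p * φ₀ q := (mul_assoc _ _ _).symm
    have hquart : ∑ q, φ q ^ 4 = ∑ q, φ₀ q ^ 4 :=
      Finset.sum_congr rfl fun q _ => by
        simp only [hφdef]
        rw [pow_abs, abs_of_nonneg (by positivity)]
    simp only [hEdef]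
    rw [hquart]
    exact add_le_add hquad le_rfl
  have hφmin : IsMinOn E S φ := by
    rw [isMinOn_iff]
    intro x hx
    exact le_trans hEφ (isMinOn_iff.mp hφ₀min x hx)
  -- Euler–Lagrange equation
  set lam : ℝ := K * ((∑ p, ∑ q, D p q * φ p * φ q) + β * ∑ q, φ q ^ 4) with hlamdef
  have heq : ∀ r, (∑ q, D r q * φ q) + β * φ r ^ 3 = lam * φ r := fun r =>
    gp_euler_lagrange D hsym β K hK φ hφS hφmin r
  -- strict positivity
  have hφpos : ∀ q, 0 < φ q := by
    intro q0
    rcases (hφnonneg q0).lt_or_eq with h | h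
    · exact h
    · exfalso
      have hq0 : φ q0 = 0 := h.symm
      have hex : ∃ qq, φ qq ≠ 0 := by
        by_contra hall
        push_neg at hall
        rw [Finset.sum_eq_zero (fun q _ => by rw [hall q]; ring)] at hφS
        simp at hφS
      obtain ⟨qq, hqq⟩ := hex
      obtain ⟨a, b, haZ, hbZ, hadj⟩ :=
        gp_grid_conn' {x : Fin m × Fin n | φ x = 0} q0 qq hq0 hqq
      have ha0 : φ a = 0 := haZ
      have hφb : 0 < φ b := (hφnonneg b).lt_of_ne (Ne.symm hbZ)
      have hDab : D a b < 0 := by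
        rcases hadj with ⟨e1, e2⟩ | ⟨e1, e2⟩
        · have t1 := hDvert a.1 a.2 b.2 e2
          have hb' : (a.1, b.2) = b := by rw [e1]
          rw [hb'] at t1
          rw [show a = (a.1, a.2) from rfl, t1]
          have : 0 < 1 / (2 * h₂ ^ 2) := by positivity
          linarith
        · have t1 := hDhor a.1 b.1 a.2 e2
          have hb' : (b.1, a.2) = b := by rw [e1]
          rw [hb'] at t1
          rw [show a = (a.1, a.2) from rfl, t1]
          have : 0 < 1 / (2 * h₁ ^ 2) := by positivity
          linarith
      have h1 := heq a
      rw [ha0] at h1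
      have hsum0 : ∑ q, D a q * φ q = 0 := by
        have : (0:ℝ) ^ 3 = 0 := by norm_num
        rw [this] at h1
        linarith [h1]
      have hsumneg : ∑ q, D a q * φ q < 0 := by
        have hlt : ∑ q, D a q * φ q < ∑ _q : Fin m × Fin n, (0:ℝ) := by
          apply Finset.sum_lt_sum
          · intro i _
            by_cases hia : i = a
            · rw [hia, ha0, mul_zero]
            · exact mul_nonpos_iff.mpr
                (Or.inr ⟨hoff a i (fun hh => hia hh.symm), hφnonneg i⟩)
          · exact ⟨b, Finset.mem_univ b, mul_neg_of_neg_of_pos hDab hφb⟩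
        simpa using hlt
      exact absurd hsum0 (ne_of_lt hsumneg)
  -- assemble
  refine ⟨(lam, φ), ⟨hφpos, ?_, ?_⟩, ?_⟩
  · funext q
    have := heq q
    simp only [Pi.add_apply, Pi.smul_apply, smul_eq_mul, Matrix.mulVec, dotProduct]
    linarith [this]
  · exact hφS
  · rintro ⟨mu, ψ⟩ ⟨hψpos, hψeq, hψnorm⟩
    have hψeq' : ∀ p, (∑ q, D p q * ψ q) + β * ψ p ^ 3 = mu * ψ p := by
      intro p
      have := congrFun hψeq p
      simp only [Pi.add_apply, Pi.smul_apply, smul_eq_mul, Matrix.mulVec, dotProduct] at this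
      linarith [this]
    have hψS : K * ∑ q, ψ q ^ 2 = 1 := hψnorm
    have hnormEq : ∑ q, ψ q ^ 2 = ∑ q, φ q ^ 2 := by
      have e1 : ∑ q, ψ q ^ 2 = 1 / K := by rw [eq_div_iff hK.ne']; linarith
      have e2 : ∑ q, φ q ^ 2 = 1 / K := by rw [eq_div_iff hK.ne']; linarith
      rw [e1, e2]
    obtain ⟨hlam_eq, hfun_eq⟩ :=
      gp_uniq_core D hsym hoff β hβ mu lam ψ φ hψpos hφpos hψeq' heq hnormEq
    exact Prod.ext hlam_eq hfun_eq
end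

section
/- Let M be an n×n real symmetric matrix, let λ ∈ ℝ be an eigenvalue of M whose eigenspace {x : M x = λ x} is one-dimensional, and let φ ≠ 0 satisfy M φ = λ φ. Then the (n+1)×(n+1) bordered block matrix [[M - λI, -φ], [-φᵀ, 0]] is invertible. -/
open Matrix


/-- for a symmetric matrix M with simple eigenvalue λ and
eigenvector φ ≠ 0, the bordered matrix [[M - λI, -φ], [-φᵀ, 0]] is invertible. -/
theorem stmt_10 (n : ℕ) (M : Matrix (Fin n) (Fin n) ℝ) (hM : M.IsSymm)
    (lam : ℝ) (φ : Fin n → ℝ) (hφ : φ ≠ 0)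
    (heig : M.mulVec φ = lam • φ)
    (hsimple : ∀ x : Fin n → ℝ, M.mulVec x = lam • x → ∃ c : ℝ, x = c • φ) :
    IsUnit (Matrix.fromBlocks (M - lam • (1 : Matrix (Fin n) (Fin n) ℝ))
      (Matrix.of fun (i : Fin n) (_ : Unit) => -φ i)
      (Matrix.of fun (_ : Unit) (j : Fin n) => -φ j)
      (0 : Matrix Unit Unit ℝ)) := by
  rw [Matrix.isUnit_iff_isUnit_det, isUnit_iff_ne_zero]
  intro hdet
  obtain ⟨v, hv, hv0⟩ := Matrix.exists_mulVec_eq_zero_iff.mpr hdet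
  set x : Fin n → ℝ := v ∘ Sum.inl with hx
  set t : ℝ := v (Sum.inr ()) with htdef
  have hvdecomp : v = Sum.elim x (fun _ => t) := by
    funext j
    cases j with
    | inl i => rfl
    | inr u => cases u; rfl
  rw [hvdecomp, Matrix.fromBlocks_mulVec] at hv0
  have h1 : (M - lam • 1) *ᵥ x = t • φ := by
    funext i
    have := congrFun hv0 (Sum.inl i)
    simp [Matrix.mulVec, dotProduct] at this ⊢
    linarith
  have h2 : φ ⬝ᵥ x = 0 := by
    have := congrFun hv0 (Sum.inr ())
    simp [Matrix.mulVec, dotProduct] at this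
    simpa [dotProduct] using this
  have hMsub : (M - lam • (1 : Matrix (Fin n) (Fin n) ℝ))ᵀ = M - lam • 1 := by
    rw [Matrix.transpose_sub, Matrix.transpose_smul, Matrix.transpose_one, hM.eq]
  have hφ0 : (M - lam • (1 : Matrix (Fin n) (Fin n) ℝ)) *ᵥ φ = 0 := by
    rw [Matrix.sub_mulVec, heig, Matrix.smul_mulVec, Matrix.one_mulVec, sub_self]
  have hφφ : φ ⬝ᵥ φ ≠ 0 := fun h => hφ (dotProduct_self_eq_zero.mp h)
  have ht0 : t = 0 := by
    have key : φ ⬝ᵥ ((M - lam • 1) *ᵥ x) = 0 := by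
      rw [Matrix.dotProduct_mulVec, ← Matrix.mulVec_transpose, hMsub, hφ0]
      simp
    rw [h1] at key
    simp [dotProduct_smul] at key
    rcases key with h | h
    · exact h
    · exact absurd h hφ
  have h1' : M *ᵥ x = lam • x := by
    have := h1
    rw [ht0, zero_smul, Matrix.sub_mulVec, Matrix.smul_mulVec, Matrix.one_mulVec,
      sub_eq_zero] at this
    exact this
  obtain ⟨c, hc⟩ := hsimple x h1'
  have hc0 : c = 0 := by
    rw [hc] at h2
    simp [dotProduct_smul] at h2
    rcases h2 with h | h
    · exact h
    · exact absurd h hφ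
  have hx0 : x = 0 := by rw [hc, hc0, zero_smul]
  apply hv
  rw [hvdecomp, hx0, ht0]
  funext j
  cases j with
  | inl i => rfl
  | inr u => rfl
end

section
/- Let n ≥ 1 and φ ∈ ℝⁿ. Then the rows of B that are not identically zero form a linearly independent family of vectors in ℝ^{2n-1}. -/
/-- the nonzero rows of the Jacobian matrix B of K ↦ A(K)φ (for a
symmetric tridiagonal A(K)) are linearly independent. Indices are 0-based: row i
(i = 0,…,n-1) has entry φ_{i-1} in column 2i-1, entry φ_i in column 2i, entry
φ_{i+1} in column 2i+1, and all other entries are zero. -/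
theorem stmt_13 (n : ℕ) (hn : 1 ≤ n) (φ : Fin n → ℝ)
    (B : Matrix (Fin n) (Fin (2 * n - 1)) ℝ)
    (hBsub : ∀ (i j : Fin n) (c : Fin (2 * n - 1)),
      (i : ℕ) = (j : ℕ) + 1 → (c : ℕ) + 1 = 2 * (i : ℕ) → B i c = φ j)
    (hBdiag : ∀ (i : Fin n) (c : Fin (2 * n - 1)),
      (c : ℕ) = 2 * (i : ℕ) → B i c = φ i)
    (hBsup : ∀ (i j : Fin n) (c : Fin (2 * n - 1)),
      (j : ℕ) = (i : ℕ) + 1 → (c : ℕ) = 2 * (i : ℕ) + 1 → B i c = φ j)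
    (hBzero : ∀ (i : Fin n) (c : Fin (2 * n - 1)),
      ¬((c : ℕ) + 1 = 2 * (i : ℕ)) → ¬((c : ℕ) = 2 * (i : ℕ)) →
      ¬((c : ℕ) = 2 * (i : ℕ) + 1) → B i c = 0) :
    LinearIndependent ℝ (fun i : {i : Fin n // B i ≠ 0} => B i.1) := by
  classical
  rw [Fintype.linearIndependent_iff]
  intro g hg s
  obtain ⟨i, hi⟩ := s
  -- key tool: if all rows j ≠ i vanish at column c, then g ⟨i,hi⟩ * B i c = 0
  have hsum : ∀ (c : Fin (2 * n - 1)), (∀ j : Fin n, j ≠ i → B j c = 0) →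
      g ⟨i, hi⟩ * B i c = 0 := by
    intro c hz
    have h0 : (∑ t : {i : Fin n // B i ≠ 0}, g t • B t.1) c = 0 := by rw [hg]; rfl
    simp only [Finset.sum_apply, Pi.smul_apply, smul_eq_mul] at h0
    have h1 : ∑ t : {i : Fin n // B i ≠ 0}, g t * B t.1 c = g ⟨i, hi⟩ * B i c := by
      refine Finset.sum_eq_single_of_mem (⟨i, hi⟩ : {i : Fin n // B i ≠ 0}) (Finset.mem_univ _) ?_
      intro t _ ht
      rw [hz t.1 (fun h => ht (Subtype.ext h)), mul_zero]
    rw [← h1, h0]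
  have hfin : ∀ g0 : ℝ, (∃ c : Fin (2 * n - 1), B i c ≠ 0 ∧ g0 * B i c = 0) → g0 = 0 := by
    rintro g0 ⟨c, hc, h⟩
    rcases mul_eq_zero.mp h with h | h
    · exact h
    · exact absurd h hc
  by_cases hφ : φ i = 0
  · -- row i is nonzero, so it has a nonzero entry, necessarily off-diagonal
    obtain ⟨c, hc⟩ : ∃ c, B i c ≠ 0 := by
      by_contra h; push_neg at h; exact hi (funext h)
    by_cases h1 : (c : ℕ) + 1 = 2 * (i : ℕ)
    · -- subdiagonal entry: column c = 2i - 1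
      refine hfin _ ⟨c, hc, hsum c ?_⟩
      intro j hj
      have hj' : (j : ℕ) ≠ (i : ℕ) := fun h => hj (Fin.ext h)
      by_cases h3 : (c : ℕ) = 2 * (j : ℕ) + 1
      · rw [hBsup j i c (by omega) h3, hφ]
      · exact hBzero j c (by omega) (by omega) h3
    · by_cases h2 : (c : ℕ) = 2 * (i : ℕ)
      · exact absurd (by rw [hBdiag i c h2, hφ]) hc
      · by_cases h3 : (c : ℕ) = 2 * (i : ℕ) + 1
        · -- superdiagonal entry: column c = 2i + 1
          refine hfin _ ⟨c, hc, hsum c ?_⟩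
          intro j hj
          have hj' : (j : ℕ) ≠ (i : ℕ) := fun h => hj (Fin.ext h)
          by_cases h4 : (c : ℕ) + 1 = 2 * (j : ℕ)
          · rw [hBsub j i c (by omega) h4, hφ]
          · exact hBzero j c h4 (by omega) (by omega)
        · exact absurd (hBzero i c h1 h2 h3) hc
  · -- φ i ≠ 0: use the diagonal column 2i
    have hlt : 2 * (i : ℕ) < 2 * n - 1 := by have := i.isLt; omega
    set c : Fin (2 * n - 1) := ⟨2 * (i : ℕ), hlt⟩ with hcdef
    have hdiag : B i c = φ i := hBdiag i c rfl
    refine hfin _ ⟨c, by rw [hdiag]; exact hφ, hsum c ?_⟩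
    intro j hj
    have hj' : (j : ℕ) ≠ (i : ℕ) := fun h => hj (Fin.ext h)
    exact hBzero j c (by simp [hcdef]; omega) (by simp [hcdef]; omega) (by simp [hcdef]; omega)
end
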